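/- arXiv:math/0303312 — 2 statements merged into one kernel-verified Lean document; each statement's English description precedes it below -/
import Mathlib

section
/- Let p and q be positive integers. Then S_disc-nc(p+q) ⊆ S_ann-nc(p,q): every disc non-crossing permutation of [p+q] is (p,q)-annular non-crossing. -/
/-- The permutation induced by `f` on the subset `B`: an element `b` is sent to the first
element of the sequence `f b, f (f b), f (f (f b)), ...` that lies in `B`
(and is left fixed if no iterate ever returns to `B`). -/
noncomputable def induced {α : Type*} (f : α → α) (B : Set α) (b : α) : α := by
  classical
  exact if h : ∃ k, 0 < k ∧ f^[k] b ∈ B then f^[Nat.find h] b else b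

/-- `A` is an orbit of the permutation `τ`. -/
def IsOrbit {α : Type*} (τ : Equiv.Perm α) (A : Set α) : Prop :=
  ∃ a, A = {b | τ.SameCycle a b}

/-- The number of orbits of `τ` (fixed points count as orbits). -/
noncomputable def numOrbits {α : Type*} (τ : Equiv.Perm α) : ℕ :=
  Set.ncard {A : Set α | IsOrbit τ A}

/-- `induced f S` acts on `a, b, c` as the 3-cycle `(a, b, c)`. -/
def MapsCyc3 {α : Type*} (f : α → α) (S : Set α) (a b c : α) : Prop :=
  induced f S a = b ∧ induced f S b = c ∧ induced f S c = a

/-- `induced f S` acts on `a, b, c, d` as the 4-cycle `(a, b, c, d)`. -/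
def MapsCyc4 {α : Type*} (f : α → α) (S : Set α) (a b c d : α) : Prop :=
  induced f S a = b ∧ induced f S b = c ∧ induced f S c = d ∧ induced f S d = a

/-- `induced f S` acts on `a, b, c, d` as the product of transpositions `(a, c)(b, d)`. -/
def MapsSwap2 {α : Type*} (f : α → α) (S : Set α) (a b c d : α) : Prop :=
  induced f S a = c ∧ induced f S c = a ∧ induced f S b = d ∧ induced f S d = b

/-- `induced f S` acts on `x, y` as the transposition `(x, y)`. -/
def MapsSwap {α : Type*} (f : α → α) (S : Set α) (x y : α) : Prop :=
  induced f S x = y ∧ induced f S y = x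

/-- `σ` is standard with respect to the "forward cycle" `γ₀`, i.e. `σ∣B = γ₀∣B` for
every orbit `B` of `σ`. -/
def DiscStandardRel {n : ℕ} (γ₀ σ : Equiv.Perm (Fin n)) : Prop :=
  ∀ A : Set (Fin n), IsOrbit σ A → ∀ b ∈ A, induced (⇑σ) A b = induced (⇑γ₀) A b

/-- The orbit partition of `σ` has no crossing: there are no `a < b < c < d` with
`a, c` in one orbit and `b, d` in a different orbit. -/
def OrbitsNoCrossing {n : ℕ} (σ : Equiv.Perm (Fin n)) : Prop :=
  ¬ ∃ a b c d : Fin n, a < b ∧ b < c ∧ c < d ∧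
      σ.SameCycle a c ∧ σ.SameCycle b d ∧ ¬ σ.SameCycle a b

/-- Disc non-crossing relative to a given forward cycle `γ₀`. -/
def DiscNCRel {n : ℕ} (γ₀ σ : Equiv.Perm (Fin n)) : Prop :=
  DiscStandardRel γ₀ σ ∧ OrbitsNoCrossing σ

/-- The set `S_disc-nc(n)` of disc non-crossing permutations of `[n]`
(here `[n] = {1, …, n}` is modelled by `Fin n`, and the forward cycle
`γ₀ = (1, 2, …, n)` is `finRotate n`). -/
def DiscNC {n : ℕ} (σ : Equiv.Perm (Fin n)) : Prop :=
  DiscNCRel (finRotate n) σ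

/-- The external points `{1, …, p}` (0-indexed: values `< p`). -/
def extSet (p q : ℕ) : Set (Fin (p + q)) := {i | (i : ℕ) < p}

/-- The internal points `{p+1, …, p+q}` (0-indexed: values `≥ p`). -/
def intSet (p q : ℕ) : Set (Fin (p + q)) := {i | p ≤ (i : ℕ)}

/-- `γ_ext = (1, 2, …, p)`, the forward cycle on the external points. -/
def gammaExt (p q : ℕ) : Equiv.Perm (Fin (p + q)) :=
  ((List.finRange (p + q)).take p).formPerm

/-- `γ_int = (p+1, p+2, …, p+q)`, the forward cycle on the internal points. -/
def gammaInt (p q : ℕ) : Equiv.Perm (Fin (p + q)) :=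
  ((List.finRange (p + q)).drop p).formPerm

/-- `γ = γ_ext · γ_int`. -/
def gammaAnn (p q : ℕ) : Equiv.Perm (Fin (p + q)) := gammaExt p q * gammaInt p q

/-- `λ_{x,y}`: the permutation fixing `x` and `y` and cycling the remaining points as
`(γ_ext(x), γ_ext²(x), …, γ_ext^{p-1}(x), γ_int(y), γ_int²(y), …, γ_int^{q-1}(y))`. -/
def lamPerm (p q : ℕ) (x y : Fin (p + q)) : Equiv.Perm (Fin (p + q)) :=
  (((List.range (p - 1)).map fun k => (gammaExt p q ^ (k + 1)) x) ++
    ((List.range (q - 1)).map fun k => (gammaInt p q ^ (k + 1)) y)).formPerm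

/-- `τ` is standard in `(p,q)`-annular sense. -/
def AnnStandard (p q : ℕ) (τ : Equiv.Perm (Fin (p + q))) : Prop :=
  (∀ A : Set (Fin (p + q)), IsOrbit τ A →
    (∀ b ∈ A ∩ extSet p q,
        induced (⇑τ) (A ∩ extSet p q) b = induced (⇑(gammaExt p q)) (A ∩ extSet p q) b) ∧
    (∀ b ∈ A ∩ intSet p q,
        induced (⇑τ) (A ∩ intSet p q) b = induced (⇑(gammaInt p q)) (A ∩ intSet p q) b)) ∧
  (∀ A : Set (Fin (p + q)), IsOrbit τ A →
    (A ∩ extSet p q).Nonempty → (A ∩ intSet p q).Nonempty →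
    (∃! a, a ∈ A ∩ extSet p q ∧ τ a ∈ intSet p q) ∧
    (∃! a, a ∈ A ∩ intSet p q ∧ τ a ∈ extSet p q))

/-- The annular crossing pattern (AC-1). -/
def AC1 (p q : ℕ) (τ : Equiv.Perm (Fin (p + q))) : Prop :=
  ∃ a b c d : Fin (p + q), List.Pairwise (· ≠ ·) [a, b, c, d] ∧
    MapsCyc4 (⇑(gammaAnn p q)) {a, b, c, d} a b c d ∧
    MapsSwap2 (⇑τ) {a, b, c, d} a b c d

/-- The annular crossing pattern (AC-2). -/
def AC2 (p q : ℕ) (τ : Equiv.Perm (Fin (p + q))) : Prop :=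
  ∃ a b c x y : Fin (p + q), List.Pairwise (· ≠ ·) [a, b, c, x, y] ∧
    x ∈ extSet p q ∧ y ∈ intSet p q ∧
    MapsCyc3 (⇑(lamPerm p q x y)) {a, b, c} a b c ∧
    MapsCyc3 (⇑τ) {a, b, c, x, y} a c b ∧
    MapsSwap (⇑τ) {a, b, c, x, y} x y

/-- The annular crossing pattern (AC-3). -/
def AC3 (p q : ℕ) (τ : Equiv.Perm (Fin (p + q))) : Prop :=
  ∃ a b c d x y : Fin (p + q), List.Pairwise (· ≠ ·) [a, b, c, d, x, y] ∧
    x ∈ extSet p q ∧ y ∈ intSet p q ∧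
    MapsCyc4 (⇑(lamPerm p q x y)) {a, b, c, d} a b c d ∧
    MapsSwap2 (⇑τ) {a, b, c, d, x, y} a b c d ∧
    MapsSwap (⇑τ) {a, b, c, d, x, y} x y

/-- The set `S_ann-nc(p,q)` of `(p,q)`-annular non-crossing permutations. -/
def AnnNC (p q : ℕ) (τ : Equiv.Perm (Fin (p + q))) : Prop :=
  AnnStandard p q τ ∧ ¬ AC1 p q τ ∧ ¬ AC2 p q τ ∧ ¬ AC3 p q τ

/-- A `(p,q)`-connecting set: meets both the external and internal points. -/
def ConnectingBlock (p q : ℕ) (B : Set (Fin (p + q))) : Prop :=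
  (B ∩ extSet p q).Nonempty ∧ (B ∩ intSet p q).Nonempty

/-- `τ` is `(p,q)`-connected: it has a `(p,q)`-connecting orbit. -/
def AnnConnected (p q : ℕ) (τ : Equiv.Perm (Fin (p + q))) : Prop :=
  ∃ A : Set (Fin (p + q)), IsOrbit τ A ∧ ConnectingBlock p q A

/-- A family of blocks has no crossing: no `a < b < c < d` with `a, c` in one block and
`b, d` in a different block. -/
def NoCrossing {n : ℕ} (ρ : Set (Set (Fin n))) : Prop :=
  ¬ ∃ (a b c d : Fin n) (B C : Set (Fin n)), B ∈ ρ ∧ C ∈ ρ ∧ B ≠ C ∧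
      a < b ∧ b < c ∧ c < d ∧ a ∈ B ∧ c ∈ B ∧ b ∈ C ∧ d ∈ C

open scoped Classical

section Induced
variable {α : Type*} {f g : α → α} {S T A : Set α} {u v w : α}

lemma induced_of_not_exists (h : ¬ ∃ k, 0 < k ∧ f^[k] u ∈ S) : induced f S u = u := by
  simp only [induced, h, dite_false]

lemma induced_of_exists (h : ∃ k, 0 < k ∧ f^[k] u ∈ S) :
    induced f S u = f^[Nat.find h] u := by
  simp only [induced, dif_pos h]

lemma induced_eq_of {k : ℕ} (hk : 0 < k) (hin : f^[k] u ∈ S)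
    (hmin : ∀ j, 0 < j → j < k → f^[j] u ∉ S) : induced f S u = f^[k] u := by
  have h : ∃ k, 0 < k ∧ f^[k] u ∈ S := ⟨k, hk, hin⟩
  rw [induced_of_exists h]
  have h1 : Nat.find h ≤ k := Nat.find_le ⟨hk, hin⟩
  have h2 : ¬ Nat.find h < k := by
    intro hlt
    exact hmin _ (Nat.find_spec h).1 hlt (Nat.find_spec h).2
  rw [le_antisymm h1 (not_lt.mp h2)]

lemma induced_spec (h : ∃ k, 0 < k ∧ f^[k] u ∈ S) :
    ∃ k, 0 < k ∧ f^[k] u = induced f S u ∧ f^[k] u ∈ S ∧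
      ∀ j, 0 < j → j < k → f^[j] u ∉ S := by
  refine ⟨Nat.find h, (Nat.find_spec h).1, (induced_of_exists h).symm, (Nat.find_spec h).2, ?_⟩
  intro j hj hjk hmem
  exact Nat.find_min h hjk ⟨hj, hmem⟩

lemma induced_mem (hu : u ∈ A) : induced f A u ∈ A := by
  by_cases h : ∃ k, 0 < k ∧ f^[k] u ∈ A
  · rw [induced_of_exists h]
    exact (Nat.find_spec h).2
  · rw [induced_of_not_exists h]
    exact hu

lemma induced_congr_sets (h : ∀ k, 0 < k → (f^[k] u ∈ S ↔ f^[k] u ∈ T)) :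
    induced f S u = induced f T u := by
  have hiff : (∃ k, 0 < k ∧ f^[k] u ∈ S) ↔ (∃ k, 0 < k ∧ f^[k] u ∈ T) := by
    constructor <;> rintro ⟨k, hk, hm⟩
    · exact ⟨k, hk, (h k hk).mp hm⟩
    · exact ⟨k, hk, (h k hk).mpr hm⟩
  by_cases hS : ∃ k, 0 < k ∧ f^[k] u ∈ S
  · have hT := hiff.mp hS
    rw [induced_of_exists hS, induced_of_exists hT]
    congr 1
    apply le_antisymm
    · exact Nat.find_le ⟨(Nat.find_spec hT).1, (h _ (Nat.find_spec hT).1).mpr (Nat.find_spec hT).2⟩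
    · exact Nat.find_le ⟨(Nat.find_spec hS).1, (h _ (Nat.find_spec hS).1).mp (Nat.find_spec hS).2⟩
  · rw [induced_of_not_exists hS, induced_of_not_exists (fun hT => hS (hiff.mpr hT))]

lemma induced_congr_fun (h : ∀ k, f^[k] u = g^[k] u) : induced f S u = induced g S u := by
  have hiff : (∃ k, 0 < k ∧ f^[k] u ∈ S) ↔ (∃ k, 0 < k ∧ g^[k] u ∈ S) := by
    constructor <;> rintro ⟨k, hk, hm⟩ <;> refine ⟨k, hk, ?_⟩
    · rwa [← h k]
    · rwa [h k]
  by_cases hS : ∃ k, 0 < k ∧ f^[k] u ∈ S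
  · have hT := hiff.mp hS
    rw [induced_of_exists hS, induced_of_exists hT]
    have heq : Nat.find hS = Nat.find hT := by
      apply le_antisymm
      · refine Nat.find_le ⟨(Nat.find_spec hT).1, ?_⟩
        rw [h _]
        exact (Nat.find_spec hT).2
      · refine Nat.find_le ⟨(Nat.find_spec hS).1, ?_⟩
        rw [← h _]
        exact (Nat.find_spec hS).2
    rw [heq, h _]
  · rw [induced_of_not_exists hS, induced_of_not_exists (fun hT => hS (hiff.mpr hT))]

lemma induced_subsingleton (h : S ⊆ {u}) : induced f S u = u := by
  by_cases hS : ∃ k, 0 < k ∧ f^[k] u ∈ S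
  · rw [induced_of_exists hS]
    exact h (Nat.find_spec hS).2
  · exact induced_of_not_exists hS

lemma induced_step (h : f u ∉ S) (hex : ∃ k, 0 < k ∧ f^[k] (f u) ∈ S) :
    induced f S u = induced f S (f u) := by
  have hS : ∃ k, 0 < k ∧ f^[k] u ∈ S := by
    obtain ⟨k, hk, hm⟩ := hex
    exact ⟨k + 1, Nat.succ_pos _, by rwa [Function.iterate_succ_apply]⟩
  rw [induced_of_exists hS, induced_of_exists hex]
  have hfind : Nat.find hS = Nat.find hex + 1 := by
    apply le_antisymm
    · refine Nat.find_le ⟨Nat.succ_pos _, ?_⟩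
      rw [Function.iterate_succ_apply]
      exact (Nat.find_spec hex).2
    · have h1 : 0 < Nat.find hS := (Nat.find_spec hS).1
      have h2 : Nat.find hS ≠ 1 := by
        intro h1'
        have hsp := (Nat.find_spec hS).2
        rw [h1'] at hsp
        simp only [Function.iterate_one] at hsp
        exact h hsp
      have h3 : 2 ≤ Nat.find hS := by omega
      have h4 : f^[Nat.find hS - 1] (f u) ∈ S := by
        rw [← Function.iterate_succ_apply]
        have he : Nat.find hS - 1 + 1 = Nat.find hS := by omega
        rw [show (Nat.find hS - 1).succ = Nat.find hS by omega]
        exact (Nat.find_spec hS).2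
      have h5 : Nat.find hex ≤ Nat.find hS - 1 := Nat.find_le ⟨by omega, h4⟩
      omega
  rw [hfind, Function.iterate_succ_apply]

end Induced


section Trans
variable {α : Type*} {f : α → α} {A T : Set α} {u : α}

lemma return_exists (hrec : ∀ z, ∃ m, 0 < m ∧ f^[m] z = z) {z : α} (hz : z ∈ A) :
    ∃ k, 0 < k ∧ f^[k] z ∈ A := by
  obtain ⟨m, hm, he⟩ := hrec z
  refine ⟨m, hm, ?_⟩
  rw [he]
  exact hz

lemma induced_apply_of_mem (hrec : ∀ z, ∃ m, 0 < m ∧ f^[m] z = z) {z : α} (hz : z ∈ A) :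
    ∃ k, 0 < k ∧ induced f A z = f^[k] z ∧ induced f A z ∈ A := by
  have h := return_exists (A := A) hrec hz
  refine ⟨Nat.find h, (Nat.find_spec h).1, induced_of_exists h, ?_⟩
  rw [induced_of_exists h]
  exact (Nat.find_spec h).2

lemma induced_iter_sub (hrec : ∀ z, ∃ m, 0 < m ∧ f^[m] z = z) (hu : u ∈ A) :
    ∀ m, ∃ k, m ≤ k ∧ (fun z => induced f A z)^[m] u = f^[k] u ∧
      (fun z => induced f A z)^[m] u ∈ A := by
  intro m
  induction m with
  | zero => exact ⟨0, le_refl _, rfl, hu⟩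
  | succ m ih =>
      obtain ⟨k, hmk, heq, hmem⟩ := ih
      obtain ⟨k', hk', heq', hmem'⟩ := induced_apply_of_mem hrec hmem
      rw [heq] at heq' hmem'
      rw [heq'] at hmem'
      have hiter : (fun z => induced f A z)^[m + 1] u = f^[k' + k] u := by
        rw [Function.iterate_succ_apply', heq, heq', ← Function.iterate_add_apply]
      refine ⟨k' + k, by omega, hiter, ?_⟩
      rw [hiter, Function.iterate_add_apply]
      exact hmem'

lemma induced_first_return (hrec : ∀ z, ∃ m, 0 < m ∧ f^[m] z = z) (hTA : T ⊆ A) :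
    ∀ k, 0 < k → ∀ u ∈ A, f^[k] u ∈ T → (∀ j, 0 < j → j < k → f^[j] u ∉ T) →
      induced (fun z => induced f A z) T u = f^[k] u := by
  intro k
  induction k using Nat.strong_induction_on with
  | _ k ih =>
    intro hk u hu hkT hmin
    have hA := return_exists (A := A) hrec hu
    set k₁ := Nat.find hA with hk₁def
    have hk₁pos : 0 < k₁ := (Nat.find_spec hA).1
    have hk₁A : f^[k₁] u ∈ A := (Nat.find_spec hA).2
    have hg : induced f A u = f^[k₁] u := induced_of_exists hA
    have hk₁le : k₁ ≤ k := Nat.find_le ⟨hk, hTA hkT⟩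
    have hshift : f^[k - k₁] (f^[k₁] u) = f^[k] u := by
      rw [← Function.iterate_add_apply]
      congr 1
      omega
    rcases eq_or_lt_of_le hk₁le with heq | hlt
    · have h1 : (fun z => induced f A z)^[1] u ∈ T := by
        simpa [hg, heq] using hkT
      have := induced_eq_of (f := fun z => induced f A z) (k := 1) Nat.one_pos h1
        (fun j hj hj1 => by omega)
      simpa [hg, heq] using this
    · have hguT : induced f A u ∉ T := by
        rw [hg]
        exact hmin k₁ hk₁pos hlt
      have hrec2 : induced (fun z => induced f A z) T (f^[k₁] u) = f^[k] u := by
        rw [← hshift]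
        refine ih (k - k₁) (by omega) (by omega) (f^[k₁] u) hk₁A (by rw [hshift]; exact hkT) ?_
        intro j hj hjk
        rw [← Function.iterate_add_apply]
        exact hmin (j + k₁) (by omega) (by omega)
      have hex : ∃ m, 0 < m ∧ (fun z => induced f A z)^[m] (induced f A u) ∈ T := by
        by_contra hne
        have h0 := induced_of_not_exists (f := fun z => induced f A z)
          (S := T) (u := induced f A u) hne
        rw [hg] at h0 hguT
        rw [h0] at hrec2
        rw [hrec2] at hguT
        exact hguT hkT
      have hstep := induced_step (f := fun z => induced f A z) (S := T) (u := u) hguT hex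
      rw [hstep]
      show induced (fun z => induced f A z) T (induced f A u) = f^[k] u
      rw [hg]
      exact hrec2

lemma induced_trans (hrec : ∀ z, ∃ m, 0 < m ∧ f^[m] z = z) (hTA : T ⊆ A) (hu : u ∈ A) :
    induced f T u = induced (fun z => induced f A z) T u := by
  by_cases hex : ∃ k, 0 < k ∧ f^[k] u ∈ T
  · obtain ⟨k, hk, heq, hkT, hmin⟩ := induced_spec hex
    rw [← heq]
    exact (induced_first_return hrec hTA k hk u hu hkT hmin).symm
  · rw [induced_of_not_exists hex]
    rw [induced_of_not_exists]
    rintro ⟨m, hm, hmT⟩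
    obtain ⟨k, hmk, heq, _⟩ := induced_iter_sub hrec hu m
    rw [heq] at hmT
    exact hex ⟨k, by omega, hmT⟩

end Trans

section Perm
variable {n : ℕ} {τ γ₀ : Equiv.Perm (Fin n)} {u v : Fin n} {S T : Set (Fin n)}

lemma perm_rec (τ : Equiv.Perm (Fin n)) : ∀ z, ∃ m, 0 < m ∧ (⇑τ)^[m] z = z := by
  intro z
  refine ⟨orderOf τ, ?_, ?_⟩
  · exact orderOf_pos τ
  · rw [← Equiv.Perm.coe_pow, pow_orderOf_eq_one]
    rfl

lemma sameCycle_iterate (τ : Equiv.Perm (Fin n)) (u : Fin n) (k : ℕ) :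
    τ.SameCycle u ((⇑τ)^[k] u) :=
  ⟨(k : ℤ), by rw [zpow_natCast, Equiv.Perm.coe_pow]⟩

lemma sameCycle_of_induced (h : induced (⇑τ) S u = v) (hne : v ≠ u) :
    τ.SameCycle u v := by
  by_cases hex : ∃ k, 0 < k ∧ (⇑τ)^[k] u ∈ S
  · rw [induced_of_exists hex] at h
    rw [← h]
    exact sameCycle_iterate τ u _
  · rw [induced_of_not_exists hex] at h
    exact absurd h.symm hne

lemma orbit_eq (h : τ.SameCycle u v) :
    {w | τ.SameCycle u w} = {w | τ.SameCycle v w} :=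
  Set.ext fun w => ⟨fun hw => h.symm.trans hw, fun hw => h.trans hw⟩

lemma induced_reduce (hstd : DiscStandardRel γ₀ τ) (u : Fin n) (T : Set (Fin n)) :
    induced (⇑τ) T u = induced (⇑γ₀) (T ∩ {w | τ.SameCycle u w}) u := by
  set A : Set (Fin n) := {w | τ.SameCycle u w} with hAdef
  have hu : u ∈ A := Equiv.Perm.SameCycle.refl τ u
  have hAorb : IsOrbit τ A := ⟨u, rfl⟩
  have hiter : ∀ k : ℕ, (⇑τ)^[k] u ∈ A := fun k => sameCycle_iterate τ u k
  have step1 : induced (⇑τ) T u = induced (⇑τ) (T ∩ A) u :=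
    induced_congr_sets (fun k hk => by
      constructor
      · intro hT
        exact ⟨hT, hiter k⟩
      · exact fun hT => hT.1)
  have step2 : induced (⇑τ) (T ∩ A) u = induced (fun z => induced (⇑τ) A z) (T ∩ A) u :=
    induced_trans (perm_rec τ) Set.inter_subset_right hu
  have giter : ∀ k, (fun z => induced (⇑τ) A z)^[k] u = (fun z => induced (⇑γ₀) A z)^[k] u ∧
      (fun z => induced (⇑τ) A z)^[k] u ∈ A := by
    intro k
    induction k with
    | zero => exact ⟨rfl, hu⟩
    | succ k ih =>
        obtain ⟨heq, hmem⟩ := ih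
        constructor
        · rw [Function.iterate_succ_apply', Function.iterate_succ_apply', ← heq]
          exact hstd A hAorb _ hmem
        · rw [Function.iterate_succ_apply']
          exact induced_mem hmem
  have step3 : induced (fun z => induced (⇑τ) A z) (T ∩ A) u =
      induced (fun z => induced (⇑γ₀) A z) (T ∩ A) u :=
    induced_congr_fun (fun k => (giter k).1)
  have step4 : induced (⇑γ₀) (T ∩ A) u = induced (fun z => induced (⇑γ₀) A z) (T ∩ A) u :=
    induced_trans (perm_rec γ₀) Set.inter_subset_right hu
  rw [step1, step2, step3, ← step4]

end Perm


section ModArith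

lemma amod_le {i j L : ℕ} (hij : i ≤ j) (hj : j < L) : (j + L - i) % L = j - i := by
  rw [show j + L - i = (j - i) + L by omega, Nat.add_mod_right, Nat.mod_eq_of_lt (by omega)]

lemma amod_gt {i j L : ℕ} (hij : j < i) (hi : i < L) : (j + L - i) % L = j + L - i :=
  Nat.mod_eq_of_lt (by omega)

lemma amod_hit {i j L : ℕ} (hi : i < L) (hj : j < L) : (i + (j + L - i) % L) % L = j := by
  rcases le_or_gt i j with h | h
  · rw [amod_le h hj, show i + (j - i) = j by omega, Nat.mod_eq_of_lt hj]
  · rw [amod_gt h hi, show i + (j + L - i) = j + L by omega, Nat.add_mod_right,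
      Nat.mod_eq_of_lt (by omega)]

lemma amod_dist {i k L : ℕ} (hi : i < L) (hk : k < L) : ((i + k) % L + L - i) % L = k := by
  rcases Nat.lt_or_ge (i + k) L with h | h
  · rw [Nat.mod_eq_of_lt h, show i + k + L - i = k + L by omega, Nat.add_mod_right,
      Nat.mod_eq_of_lt hk]
  · have h2 : (i + k) % L = i + k - L := by
      rw [Nat.mod_eq_sub_mod h, Nat.mod_eq_of_lt (by omega)]
    rw [h2, show i + k - L + L - i = k by omega, Nat.mod_eq_of_lt hk]

lemma amod_pos {i j L : ℕ} (hi : i < L) (hj : j < L) (hij : i ≠ j) :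
    0 < (j + L - i) % L := by
  rcases le_or_gt i j with h | h
  · rw [amod_le h hj]; omega
  · rw [amod_gt h hi]; omega

lemma mod_inj {a i j L : ℕ} (hi : i < L) (hj : j < L) (h : (a + i) % L = (a + j) % L) :
    i = j := by
  have h1 : i ≡ j [MOD L] := Nat.ModEq.add_left_cancel' a h
  rcases le_or_gt i j with h2 | h2
  · have h3 := (Nat.modEq_iff_dvd' h2).mp h1
    rcases Nat.eq_zero_or_pos (j - i) with h4 | h4
    · omega
    · have := Nat.le_of_dvd h4 h3
      omega
  · have h3 := (Nat.modEq_iff_dvd' h2.le).mp h1.symm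
    rcases Nat.eq_zero_or_pos (i - j) with h4 | h4
    · omega
    · have := Nat.le_of_dvd h4 h3
      omega

end ModArith


/-- Cyclic distance on `Fin n` along the forward rotation. -/
def dO {n : ℕ} (u v : Fin n) : ℕ := (v.val + n - u.val) % n

section Rotate
variable {n : ℕ} {T : Set (Fin n)} {b v w : Fin n}

lemma rot_iter (k : ℕ) (u : Fin n) : ((finRotate n)^[k] u).val = (u.val + k) % n := by
  induction k with
  | zero => simp [Nat.mod_eq_of_lt u.isLt]
  | succ k ih =>
      rcases n with - | m
      · exact absurd u.pos (by omega)
      · rw [Function.iterate_succ_apply', finRotate_succ_apply, Fin.add_def, ih]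
        simp only [Fin.val_one']
        rw [← Nat.add_mod, Nat.add_assoc]

lemma rot_hit (hw : w ≠ b) : (finRotate n)^[dO b w] b = w := by
  have hn : 0 < n := b.pos
  apply Fin.ext
  rw [rot_iter]
  exact amod_hit b.isLt w.isLt

lemma dO_pos (hw : w ≠ b) : 0 < dO b w :=
  amod_pos b.isLt w.isLt (fun h => hw (Fin.ext h.symm))

lemma dO_lt (b w : Fin n) : dO b w < n := Nat.mod_lt _ b.pos

lemma gamma0_min (hw : w ∈ T) (hwb : w ≠ b) :
    induced (⇑(finRotate n)) T b ≠ b ∧ induced (⇑(finRotate n)) T b ∈ T ∧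
    ∀ w' ∈ T, w' ≠ b → dO b (induced (⇑(finRotate n)) T b) ≤ dO b w' := by
  classical
  have hex : ∃ k, 0 < k ∧ (⇑(finRotate n))^[k] b ∈ T :=
    ⟨dO b w, dO_pos hwb, by rw [rot_hit hwb]; exact hw⟩
  have hmin : ∀ w' ∈ T, w' ≠ b → Nat.find hex ≤ dO b w' := by
    intro w' hw' hw'b
    exact Nat.find_le ⟨dO_pos hw'b, by rw [rot_hit hw'b]; exact hw'⟩
  have hklt : Nat.find hex < n := lt_of_le_of_lt (hmin w hw hwb) (dO_lt b w)
  have hval : (induced (⇑(finRotate n)) T b).val = (b.val + Nat.find hex) % n := by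
    rw [induced_of_exists hex, rot_iter]
  have hne : induced (⇑(finRotate n)) T b ≠ b := by
    intro h
    have h0 : (b.val + Nat.find hex) % n = (b.val + 0) % n := by
      rw [Nat.add_zero, Nat.mod_eq_of_lt b.isLt, ← hval, h]
    have h1 := mod_inj hklt b.pos h0
    have h2 := (Nat.find_spec hex).1
    omega
  have hdO : dO b (induced (⇑(finRotate n)) T b) = Nat.find hex := by
    unfold dO
    rw [hval]
    exact amod_dist b.isLt hklt
  refine ⟨hne, ?_, ?_⟩
  · rw [induced_of_exists hex]
    exact (Nat.find_spec hex).2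
  · intro w' hw' hw'b
    rw [hdO]
    exact hmin w' hw' hw'b

lemma gamma0_next (hv : v ∈ T) (hvb : v ≠ b)
    (hmin : ∀ w' ∈ T, w' ≠ b → dO b v ≤ dO b w') :
    induced (⇑(finRotate n)) T b = v := by
  obtain ⟨hne, hmem, hm⟩ := gamma0_min hv hvb
  have h1 : dO b (induced (⇑(finRotate n)) T b) = dO b v :=
    le_antisymm (hm v hv hvb) (hmin _ hmem hne)
  have := rot_hit hne
  rw [h1, rot_hit hvb] at this
  exact this.symm

end Rotate

/-- Cyclic distance along the cycle given by a list. -/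
def dl {α : Type*} [DecidableEq α] (l : List α) (u v : α) : ℕ :=
  (l.idxOf v + l.length - l.idxOf u) % l.length

section FormPerm
variable {α : Type*} [DecidableEq α] {l : List α} {T : Set α} {u v w : α}

lemma fp_iter (hnd : l.Nodup) (hu : u ∈ l) (k : ℕ) :
    (⇑l.formPerm)^[k] u = l[(l.idxOf u + k) % l.length]'
      (Nat.mod_lt _ (List.length_pos_of_mem hu)) := by
  conv_lhs => rw [← List.getElem_idxOf (List.idxOf_lt_length_iff.mpr hu)]
  rw [← Equiv.Perm.coe_pow]
  exact List.formPerm_pow_apply_getElem l hnd k _ _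

lemma fp_hit (hnd : l.Nodup) (hu : u ∈ l) (hw : w ∈ l) (hwu : w ≠ u) :
    (⇑l.formPerm)^[dl l u w] u = w := by
  rw [fp_iter hnd hu]
  have := amod_hit (List.idxOf_lt_length_iff.mpr hu) (List.idxOf_lt_length_iff.mpr hw)
  simp only [dl, this]
  exact List.getElem_idxOf _

lemma indexOf_ne (hu : u ∈ l) (hw : w ∈ l) (hwu : w ≠ u) :
    l.idxOf w ≠ l.idxOf u := by
  intro h
  apply hwu
  rw [← List.getElem_idxOf (List.idxOf_lt_length_iff.mpr hw),
    ← List.getElem_idxOf (List.idxOf_lt_length_iff.mpr hu)]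
  congr 1

lemma dl_pos (hu : u ∈ l) (hw : w ∈ l) (hwu : w ≠ u) : 0 < dl l u w :=
  amod_pos (List.idxOf_lt_length_iff.mpr hu) (List.idxOf_lt_length_iff.mpr hw)
    (fun h => indexOf_ne hu hw hwu h.symm)

lemma dl_lt (hu : u ∈ l) (w : α) : dl l u w < l.length :=
  Nat.mod_lt _ (List.length_pos_of_mem hu)

lemma nodup_indexOf_getElem (hnd : l.Nodup) {i : ℕ} (hi : i < l.length) :
    l.idxOf (l[i]'hi) = i := by
  have h1 : l.idxOf (l[i]'hi) < l.length := List.idxOf_lt_length_iff.mpr (List.getElem_mem hi)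
  have h2 : l[l.idxOf (l[i]'hi)]'h1 = l[i]'hi := List.getElem_idxOf h1
  exact (List.Nodup.getElem_inj_iff hnd).mp h2

lemma formPerm_min (hnd : l.Nodup) (hu : u ∈ l) (hw : w ∈ T) (hwl : w ∈ l) (hwu : w ≠ u) :
    induced (⇑l.formPerm) T u ≠ u ∧ induced (⇑l.formPerm) T u ∈ T ∧
    induced (⇑l.formPerm) T u ∈ l ∧
    ∀ w' ∈ T, w' ∈ l → w' ≠ u → dl l u (induced (⇑l.formPerm) T u) ≤ dl l u w' := by
  classical
  have hex : ∃ k, 0 < k ∧ (⇑l.formPerm)^[k] u ∈ T :=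
    ⟨dl l u w, dl_pos hu hwl hwu, by rw [fp_hit hnd hu hwl hwu]; exact hw⟩
  have hmin : ∀ w' ∈ T, w' ∈ l → w' ≠ u → Nat.find hex ≤ dl l u w' := by
    intro w' hw' hw'l hw'u
    exact Nat.find_le ⟨dl_pos hu hw'l hw'u, by rw [fp_hit hnd hu hw'l hw'u]; exact hw'⟩
  have hiu := List.idxOf_lt_length_iff.mpr hu
  have hklt : Nat.find hex < l.length := lt_of_le_of_lt (hmin w hw hwl hwu) (dl_lt hu w)
  have hval : induced (⇑l.formPerm) T u =
      l[(l.idxOf u + Nat.find hex) % l.length]'(Nat.mod_lt _ (List.length_pos_of_mem hu)) := by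
    rw [induced_of_exists hex, fp_iter hnd hu]
  have hidx : l.idxOf (induced (⇑l.formPerm) T u) =
      (l.idxOf u + Nat.find hex) % l.length := by
    rw [hval, nodup_indexOf_getElem hnd]
  have hne : induced (⇑l.formPerm) T u ≠ u := by
    intro h
    rw [h] at hidx
    have h0 : (l.idxOf u + 0) % l.length = (l.idxOf u + Nat.find hex) % l.length := by
      rw [Nat.add_zero, Nat.mod_eq_of_lt hiu]
      exact hidx
    have h1 := mod_inj (by omega) hklt h0
    have h2 := (Nat.find_spec hex).1
    omega
  have hdl : dl l u (induced (⇑l.formPerm) T u) = Nat.find hex := by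
    unfold dl
    rw [hidx]
    exact amod_dist hiu hklt
  refine ⟨hne, ?_, ?_, ?_⟩
  · rw [induced_of_exists hex]
    exact (Nat.find_spec hex).2
  · rw [hval]
    exact List.getElem_mem _
  · intro w' hw' hw'l hw'u
    rw [hdl]
    exact hmin w' hw' hw'l hw'u

lemma formPerm_next (hnd : l.Nodup) (hu : u ∈ l) (hv : v ∈ T) (hvl : v ∈ l) (hvu : v ≠ u)
    (hmin : ∀ w' ∈ T, w' ∈ l → w' ≠ u → dl l u v ≤ dl l u w') :
    induced (⇑l.formPerm) T u = v := by
  obtain ⟨hne, hmem, hmeml, hm⟩ := formPerm_min hnd hu hv hvl hvu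
  have h1 : dl l u (induced (⇑l.formPerm) T u) = dl l u v :=
    le_antisymm (hm v hv hvl hvu) (hmin _ hmem hmeml hne)
  have := fp_hit hnd hu hmeml hne
  rw [h1, fp_hit hnd hu hvl hvu] at this
  exact this.symm

end FormPerm


section Lists
variable {p q : ℕ}

/-- The list `[0, 1, …, p-1]` of external points. -/
abbrev extL (p q : ℕ) : List (Fin (p + q)) := (List.finRange (p + q)).take p

/-- The list `[p, p+1, …, p+q-1]` of internal points. -/
abbrev intL (p q : ℕ) : List (Fin (p + q)) := (List.finRange (p + q)).drop p

lemma length_extL : (extL p q).length = p := by simp [List.length_take]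

lemma length_intL : (intL p q).length = q := by simp [List.length_drop]

lemma val_getElem_extL {i : ℕ} (h : i < (extL p q).length) : ((extL p q)[i]'h).val = i := by
  simp [List.getElem_take, List.getElem_finRange]

lemma val_getElem_intL {i : ℕ} (h : i < (intL p q).length) : ((intL p q)[i]'h).val = p + i := by
  simp [List.getElem_drop, List.getElem_finRange]

lemma nodup_extL : (extL p q).Nodup := (List.nodup_finRange _).sublist (List.take_sublist _ _)

lemma nodup_intL : (intL p q).Nodup := (List.nodup_finRange _).sublist (List.drop_sublist _ _)

lemma mem_extL {z : Fin (p + q)} : z ∈ extL p q ↔ z.val < p := by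
  constructor
  · intro hz
    obtain ⟨i, hi, hzi⟩ := List.mem_iff_getElem.mp hz
    have := val_getElem_extL hi
    rw [hzi] at this
    rw [length_extL] at hi
    omega
  · intro hz
    have hlen : z.val < (extL p q).length := by rw [length_extL]; exact hz
    refine List.mem_iff_getElem.mpr ⟨z.val, hlen, ?_⟩
    exact Fin.ext (val_getElem_extL hlen)

lemma mem_intL {z : Fin (p + q)} : z ∈ intL p q ↔ p ≤ z.val := by
  constructor
  · intro hz
    obtain ⟨i, hi, hzi⟩ := List.mem_iff_getElem.mp hz
    have := val_getElem_intL hi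
    rw [hzi] at this
    omega
  · intro hz
    have hlen : z.val - p < (intL p q).length := by rw [length_intL]; omega
    refine List.mem_iff_getElem.mpr ⟨z.val - p, hlen, ?_⟩
    apply Fin.ext
    rw [val_getElem_intL hlen]
    omega

lemma indexOf_extL {z : Fin (p + q)} (hz : z.val < p) : (extL p q).idxOf z = z.val := by
  have hlen : z.val < (extL p q).length := by rw [length_extL]; exact hz
  conv_lhs => rw [show z = (extL p q)[z.val]'hlen from (Fin.ext (val_getElem_extL hlen)).symm]
  exact nodup_indexOf_getElem nodup_extL hlen

lemma indexOf_intL {z : Fin (p + q)} (hz : p ≤ z.val) : (intL p q).idxOf z = z.val - p := by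
  have hlen : z.val - p < (intL p q).length := by rw [length_intL]; omega
  have hze : z = (intL p q)[z.val - p]'hlen := by
    apply Fin.ext
    rw [val_getElem_intL hlen]
    omega
  conv_lhs => rw [hze]
  exact nodup_indexOf_getElem nodup_intL hlen

lemma gammaExt_eq_formPerm : gammaExt p q = (extL p q).formPerm := rfl

lemma gammaInt_eq_formPerm : gammaInt p q = (intL p q).formPerm := rfl

lemma gammaExt_fix {z : Fin (p + q)} (hz : p ≤ z.val) : gammaExt p q z = z :=
  List.formPerm_apply_of_notMem (fun h => by rw [mem_extL] at h; omega)

lemma gammaInt_fix {z : Fin (p + q)} (hz : z.val < p) : gammaInt p q z = z :=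
  List.formPerm_apply_of_notMem (fun h => by rw [mem_intL] at h; omega)

lemma gammaExt_iter {z : Fin (p + q)} (hz : z.val < p) (k : ℕ) :
    ((⇑(gammaExt p q))^[k] z).val = (z.val + k) % p := by
  have hmem : z ∈ extL p q := mem_extL.mpr hz
  rw [gammaExt_eq_formPerm, fp_iter nodup_extL hmem k, val_getElem_extL, indexOf_extL hz,
    length_extL]

lemma gammaInt_iter {z : Fin (p + q)} (hz : p ≤ z.val) (k : ℕ) :
    ((⇑(gammaInt p q))^[k] z).val = p + ((z.val - p + k) % q) := by
  have hmem : z ∈ intL p q := mem_intL.mpr hz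
  rw [gammaInt_eq_formPerm, fp_iter nodup_intL hmem k, val_getElem_intL, indexOf_intL hz,
    length_intL]

lemma gammaExt_iter_lt {z : Fin (p + q)} (hz : z.val < p) (k : ℕ) :
    ((⇑(gammaExt p q))^[k] z).val < p := by
  rw [gammaExt_iter hz]
  exact Nat.mod_lt _ (by omega)

lemma gammaInt_iter_ge {z : Fin (p + q)} (hz : p ≤ z.val) (k : ℕ) :
    p ≤ ((⇑(gammaInt p q))^[k] z).val := by
  rw [gammaInt_iter hz]
  omega

lemma gammaAnn_iter_ext {z : Fin (p + q)} (hz : z.val < p) (k : ℕ) :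
    (⇑(gammaAnn p q))^[k] z = (⇑(gammaExt p q))^[k] z := by
  induction k with
  | zero => rfl
  | succ k ih =>
      rw [Function.iterate_succ_apply', Function.iterate_succ_apply', ih]
      show gammaExt p q (gammaInt p q _) = _
      rw [gammaInt_fix (gammaExt_iter_lt hz k)]

lemma gammaAnn_iter_int {z : Fin (p + q)} (hz : p ≤ z.val) (k : ℕ) :
    (⇑(gammaAnn p q))^[k] z = (⇑(gammaInt p q))^[k] z := by
  induction k with
  | zero => rfl
  | succ k ih =>
      rw [Function.iterate_succ_apply', Function.iterate_succ_apply', ih]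
      show gammaExt p q (gammaInt p q _) = _
      have h1 : p ≤ (gammaInt p q ((⇑(gammaInt p q))^[k] z)).val := by
        have h2 := gammaInt_iter_ge hz (k + 1)
        rw [Function.iterate_succ_apply'] at h2
        exact h2
      rw [gammaExt_fix h1]

lemma dl_extL_cases {u v : Fin (p + q)} (hu : u.val < p) (hv : v.val < p) (huv : u ≠ v) :
    (u.val < v.val ∧ dl (extL p q) u v = v.val - u.val) ∨
    (v.val < u.val ∧ dl (extL p q) u v = v.val + p - u.val) := by
  have hvne := Fin.val_ne_of_ne huv
  unfold dl
  rw [indexOf_extL hu, indexOf_extL hv, length_extL]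
  rcases lt_or_gt_of_ne hvne with h | h
  · left
    exact ⟨h, amod_le h.le hv⟩
  · right
    exact ⟨h, amod_gt h hu⟩

lemma dl_intL_cases {u v : Fin (p + q)} (hu : p ≤ u.val) (hv : p ≤ v.val) (huv : u ≠ v) :
    (u.val < v.val ∧ dl (intL p q) u v = v.val - u.val) ∨
    (v.val < u.val ∧ dl (intL p q) u v = v.val + q - u.val) := by
  have hvne := Fin.val_ne_of_ne huv
  have huq : u.val - p < q := by omega
  have hvq : v.val - p < q := by omega
  unfold dl
  rw [indexOf_intL hu, indexOf_intL hv, length_intL]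
  rcases lt_or_gt_of_ne hvne with h | h
  · left
    refine ⟨h, ?_⟩
    rw [amod_le (by omega) hvq]
    omega
  · right
    refine ⟨h, ?_⟩
    rw [amod_gt (by omega) huq]
    omega

end Lists


section LamList
variable {p q : ℕ}

/-- The underlying list of the cycle `λ_{x,y}`. -/
abbrev lamL (p q : ℕ) (x y : Fin (p + q)) : List (Fin (p + q)) :=
  ((List.range (p - 1)).map fun k => (gammaExt p q ^ (k + 1)) x) ++
    ((List.range (q - 1)).map fun k => (gammaInt p q ^ (k + 1)) y)

lemma lamPerm_eq_formPerm (x y : Fin (p + q)) : lamPerm p q x y = (lamL p q x y).formPerm := rfl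

lemma length_lamL (x y : Fin (p + q)) : (lamL p q x y).length = (p - 1) + (q - 1) := by
  simp [List.length_append, List.length_map, List.length_range]

lemma val_gammaExt_pow {x : Fin (p + q)} (hx : x.val < p) (m : ℕ) :
    ((gammaExt p q ^ m) x).val = (x.val + m) % p := by
  rw [Equiv.Perm.coe_pow]
  exact gammaExt_iter hx m

lemma val_gammaInt_pow {y : Fin (p + q)} (hy : p ≤ y.val) (m : ℕ) :
    ((gammaInt p q ^ m) y).val = p + ((y.val - p + m) % q) := by
  rw [Equiv.Perm.coe_pow]
  exact gammaInt_iter hy m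

lemma val_lamL_lt {x y : Fin (p + q)} (hx : x.val < p) {i : ℕ} (hi : i < p - 1)
    (h : i < (lamL p q x y).length) :
    ((lamL p q x y)[i]'h).val = (x.val + (i + 1)) % p := by
  have h1 : i < ((List.range (p - 1)).map fun k => (gammaExt p q ^ (k + 1)) x).length := by
    simp [List.length_map, List.length_range]
    omega
  rw [List.getElem_append_left h1, List.getElem_map, List.getElem_range, val_gammaExt_pow hx]

lemma val_lamL_ge {x y : Fin (p + q)} (hy : p ≤ y.val) {i : ℕ} (hi : p - 1 ≤ i)
    (h : i < (lamL p q x y).length) :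
    ((lamL p q x y)[i]'h).val = p + ((y.val - p + (i - (p - 1) + 1)) % q) := by
  have h1 : ((List.range (p - 1)).map fun k => (gammaExt p q ^ (k + 1)) x).length ≤ i := by
    simp [List.length_map, List.length_range]
    omega
  have hlen := length_lamL (p := p) (q := q) x y
  rw [List.getElem_append_right h1, List.getElem_map, List.getElem_range, val_gammaInt_pow hy]
  congr 3
  simp [List.length_map, List.length_range]

lemma nodup_lamL {x y : Fin (p + q)} (hx : x.val < p) (hy : p ≤ y.val) :
    (lamL p q x y).Nodup := by
  apply List.Nodup.append
  · apply List.Nodup.map_on _ List.nodup_range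
    intro k1 hk1 k2 hk2 heq
    rw [List.mem_range] at hk1 hk2
    have hv : ((gammaExt p q ^ (k1 + 1)) x).val = ((gammaExt p q ^ (k2 + 1)) x).val := by
      rw [heq]
    rw [val_gammaExt_pow hx, val_gammaExt_pow hx] at hv
    have := mod_inj (L := p) (by omega) (by omega) hv
    omega
  · apply List.Nodup.map_on _ List.nodup_range
    intro k1 hk1 k2 hk2 heq
    rw [List.mem_range] at hk1 hk2
    have hv : ((gammaInt p q ^ (k1 + 1)) y).val = ((gammaInt p q ^ (k2 + 1)) y).val := by
      rw [heq]
    rw [val_gammaInt_pow hy, val_gammaInt_pow hy] at hv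
    have hv2 : (y.val - p + (k1 + 1)) % q = (y.val - p + (k2 + 1)) % q := by omega
    have := mod_inj (L := q) (by omega) (by omega) hv2
    omega
  · rw [List.disjoint_left]
    intro z hz1 hz2
    obtain ⟨k1, hk1, he1⟩ := List.mem_map.mp hz1
    obtain ⟨k2, hk2, he2⟩ := List.mem_map.mp hz2
    rw [List.mem_range] at hk1 hk2
    have h1 : z.val < p := by
      rw [← he1, val_gammaExt_pow hx]
      exact Nat.mod_lt _ (by omega)
    have h2 : p ≤ z.val := by
      rw [← he2, val_gammaInt_pow hy]
      omega
    omega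

lemma lamL_mem_idx {x y z : Fin (p + q)} (hx : x.val < p) (hy : p ≤ y.val)
    (hzx : z ≠ x) (hzy : z ≠ y) :
    z ∈ lamL p q x y ∧
    ((z.val < p ∧ ((x.val < z.val ∧ (lamL p q x y).idxOf z = z.val - x.val - 1) ∨
        (z.val < x.val ∧ (lamL p q x y).idxOf z = z.val + p - 1 - x.val))) ∨
     (p ≤ z.val ∧ ((y.val < z.val ∧ (lamL p q x y).idxOf z = (p - 1) + (z.val - y.val - 1)) ∨
        (z.val < y.val ∧
          (lamL p q x y).idxOf z = (p - 1) + (z.val + q - 1 - y.val))))) := by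
  have hnd := nodup_lamL (x := x) (y := y) hx hy
  have hlen := length_lamL (p := p) (q := q) x y
  have key : ∀ i : ℕ, ∀ h : i < (lamL p q x y).length, z = (lamL p q x y)[i]'h →
      z ∈ lamL p q x y ∧ (lamL p q x y).idxOf z = i := by
    intro i h hzi
    constructor
    · rw [hzi]; exact List.getElem_mem h
    · rw [hzi]; exact nodup_indexOf_getElem hnd h
  rcases Nat.lt_or_ge z.val p with hz | hz
  · have hvne : z.val ≠ x.val := fun h => hzx (Fin.ext h)
    rcases lt_or_gt_of_ne hvne with h | h
    · -- z < x
      have hi : z.val + p - 1 - x.val < (lamL p q x y).length := by omega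
      have hik : z.val + p - 1 - x.val < p - 1 := by omega
      have hzi : z = (lamL p q x y)[z.val + p - 1 - x.val]'hi := by
        apply Fin.ext
        rw [val_lamL_lt hx hik]
        rw [show x.val + (z.val + p - 1 - x.val + 1) = z.val + p by omega, Nat.add_mod_right,
          Nat.mod_eq_of_lt hz]
      obtain ⟨hm, hidx⟩ := key _ hi hzi
      exact ⟨hm, Or.inl ⟨hz, Or.inr ⟨h, hidx⟩⟩⟩
    · -- x < z
      have hi : z.val - x.val - 1 < (lamL p q x y).length := by omega
      have hik : z.val - x.val - 1 < p - 1 := by omega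
      have hzi : z = (lamL p q x y)[z.val - x.val - 1]'hi := by
        apply Fin.ext
        rw [val_lamL_lt hx hik]
        rw [show x.val + (z.val - x.val - 1 + 1) = z.val by omega, Nat.mod_eq_of_lt hz]
      obtain ⟨hm, hidx⟩ := key _ hi hzi
      exact ⟨hm, Or.inl ⟨hz, Or.inl ⟨h, hidx⟩⟩⟩
  · have hzq : z.val < p + q := z.isLt
    have hvne : z.val ≠ y.val := fun h => hzy (Fin.ext h)
    rcases lt_or_gt_of_ne hvne with h | h
    · -- z < y
      have hi : (p - 1) + (z.val + q - 1 - y.val) < (lamL p q x y).length := by omega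
      have hik : p - 1 ≤ (p - 1) + (z.val + q - 1 - y.val) := by omega
      have hzi : z = (lamL p q x y)[(p - 1) + (z.val + q - 1 - y.val)]'hi := by
        apply Fin.ext
        rw [val_lamL_ge hy hik]
        rw [show y.val - p + ((p - 1) + (z.val + q - 1 - y.val) - (p - 1) + 1) =
          (z.val - p) + q by omega, Nat.add_mod_right, Nat.mod_eq_of_lt (by omega)]
        omega
      obtain ⟨hm, hidx⟩ := key _ hi hzi
      exact ⟨hm, Or.inr ⟨hz, Or.inr ⟨h, hidx⟩⟩⟩
    · -- y < z
      have hi : (p - 1) + (z.val - y.val - 1) < (lamL p q x y).length := by omega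
      have hik : p - 1 ≤ (p - 1) + (z.val - y.val - 1) := by omega
      have hzi : z = (lamL p q x y)[(p - 1) + (z.val - y.val - 1)]'hi := by
        apply Fin.ext
        rw [val_lamL_ge hy hik]
        rw [show y.val - p + ((p - 1) + (z.val - y.val - 1) - (p - 1) + 1) =
          z.val - p by omega, Nat.mod_eq_of_lt (by omega)]
        omega
      obtain ⟨hm, hidx⟩ := key _ hi hzi
      exact ⟨hm, Or.inr ⟨hz, Or.inl ⟨h, hidx⟩⟩⟩

lemma dl_lamL_cases {x y u v : Fin (p + q)} (hu : u ∈ lamL p q x y) (hv : v ∈ lamL p q x y)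
    (hnd : (lamL p q x y).Nodup) (huv : u ≠ v) :
    ((lamL p q x y).idxOf u < (lamL p q x y).idxOf v ∧
      dl (lamL p q x y) u v = (lamL p q x y).idxOf v - (lamL p q x y).idxOf u) ∨
    ((lamL p q x y).idxOf v < (lamL p q x y).idxOf u ∧
      dl (lamL p q x y) u v = (lamL p q x y).idxOf v + ((p - 1) + (q - 1)) -
        (lamL p q x y).idxOf u) := by
  have hiu := List.idxOf_lt_length_iff.mpr hu
  have hiv := List.idxOf_lt_length_iff.mpr hv
  have hne : (lamL p q x y).idxOf u ≠ (lamL p q x y).idxOf v :=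
    indexOf_ne hv hu huv
  have hlen := length_lamL (p := p) (q := q) x y
  rw [hlen] at hiu hiv
  unfold dl
  rw [hlen]
  rcases lt_or_gt_of_ne hne with h | h
  · left
    exact ⟨h, amod_le h.le hiv⟩
  · right
    exact ⟨h, amod_gt h hiu⟩

end LamList


section Main1
variable {n : ℕ} {τ : Equiv.Perm (Fin n)} {S T : Set (Fin n)} {u v w : Fin n}

lemma dO_cases (huv : u ≠ v) :
    (u.val < v.val ∧ dO u v = v.val - u.val) ∨
    (v.val < u.val ∧ dO u v = v.val + n - u.val) := by
  have hvne := Fin.val_ne_of_ne huv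
  unfold dO
  rcases lt_or_gt_of_ne hvne with h | h
  · left
    exact ⟨h, amod_le h.le v.isLt⟩
  · right
    exact ⟨h, amod_gt h u.isLt⟩

lemma tau_min' (hstd : DiscStandardRel (finRotate n) τ)
    (h : induced (⇑τ) S u = v) (hvu : v ≠ u)
    (hw : w ∈ S) (hsc : τ.SameCycle u w) (hwu : w ≠ u) :
    dO u v ≤ dO u w := by
  have hred := induced_reduce hstd u S
  rw [h] at hred
  have m := gamma0_min (T := S ∩ {z | τ.SameCycle u z}) (b := u) (w := w) ⟨hw, hsc⟩ hwu
  have hm := m.2.2 w ⟨hw, hsc⟩ hwu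
  rw [← hred] at hm
  exact hm

lemma tau_two_cycle_contra (hstd : DiscStandardRel (finRotate n) τ)
    (h1 : induced (⇑τ) S u = v) (h2 : induced (⇑τ) S v = u)
    (hvu : v ≠ u) (hw : w ∈ S) (hsc : τ.SameCycle u w) (hwu : w ≠ u) (hwv : w ≠ v) :
    False := by
  have hscuv : τ.SameCycle u v := sameCycle_of_induced h1 hvu
  have d1 : dO u v ≤ dO u w := tau_min' hstd h1 hvu hw hsc hwu
  have d2 : dO v u ≤ dO v w := tau_min' hstd h2 hvu.symm hw (hscuv.symm.trans hsc) hwv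
  rcases dO_cases hvu with ⟨h3, h4⟩ | ⟨h3, h4⟩ <;>
    rcases dO_cases hvu.symm with ⟨h5, h6⟩ | ⟨h5, h6⟩ <;>
    rcases dO_cases (Ne.symm hwu) with ⟨h7, h8⟩ | ⟨h7, h8⟩ <;>
    rcases dO_cases (Ne.symm hwv) with ⟨h9, h10⟩ | ⟨h9, h10⟩ <;>
    have := u.isLt <;> have := v.isLt <;> have := w.isLt <;> omega

end Main1

section Main2
variable {p q : ℕ} {τ : Equiv.Perm (Fin (p + q))} {S T : Set (Fin (p + q))}
  {u v w b : Fin (p + q)}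

lemma gamma0_eq_gammaExt (hT : T ⊆ extSet p q) (hb : b.val < p) :
    induced (⇑(finRotate (p + q))) T b = induced (⇑(gammaExt p q)) T b := by
  by_cases hex : ∃ v, v ∈ T ∧ v ≠ b
  · obtain ⟨v0, hv0, hv0b⟩ := hex
    obtain ⟨hne, hmem, hmin⟩ := gamma0_min (T := T) (b := b) hv0 hv0b
    set v := induced (⇑(finRotate (p + q))) T b with hvdef
    have hvp : v.val < p := hT hmem
    rw [gammaExt_eq_formPerm]
    symm
    apply formPerm_next nodup_extL (mem_extL.mpr hb) hmem (mem_extL.mpr hvp) hne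
    intro w' hw' hw'l hw'b
    have hw'p : w'.val < p := mem_extL.mp hw'l
    have hd := hmin w' hw' hw'b
    have hvn := v.isLt
    have hwn := w'.isLt
    rcases dO_cases (Ne.symm hne) with ⟨h1, h2⟩ | ⟨h1, h2⟩ <;>
      rcases dO_cases (Ne.symm hw'b) with ⟨h3, h4⟩ | ⟨h3, h4⟩ <;>
      rcases dl_extL_cases hb hvp (Ne.symm hne) with ⟨h5, h6⟩ | ⟨h5, h6⟩ <;>
      rcases dl_extL_cases hb hw'p (Ne.symm hw'b) with ⟨h7, h8⟩ | ⟨h7, h8⟩ <;>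
      omega
  · push_neg at hex
    have hsub : T ⊆ {b} := fun z hz => hex z hz
    rw [induced_subsingleton hsub, induced_subsingleton hsub]

lemma gamma0_eq_gammaInt (hT : T ⊆ intSet p q) (hb : p ≤ b.val) :
    induced (⇑(finRotate (p + q))) T b = induced (⇑(gammaInt p q)) T b := by
  by_cases hex : ∃ v, v ∈ T ∧ v ≠ b
  · obtain ⟨v0, hv0, hv0b⟩ := hex
    obtain ⟨hne, hmem, hmin⟩ := gamma0_min (T := T) (b := b) hv0 hv0b
    set v := induced (⇑(finRotate (p + q))) T b with hvdef
    have hvp : p ≤ v.val := hT hmem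
    rw [gammaInt_eq_formPerm]
    symm
    apply formPerm_next nodup_intL (mem_intL.mpr hb) hmem (mem_intL.mpr hvp) hne
    intro w' hw' hw'l hw'b
    have hw'p : p ≤ w'.val := mem_intL.mp hw'l
    have hd := hmin w' hw' hw'b
    have hbn := b.isLt
    have hvn := v.isLt
    have hwn := w'.isLt
    rcases dO_cases (Ne.symm hne) with ⟨h1, h2⟩ | ⟨h1, h2⟩ <;>
      rcases dO_cases (Ne.symm hw'b) with ⟨h3, h4⟩ | ⟨h3, h4⟩ <;>
      rcases dl_intL_cases hb hvp (Ne.symm hne) with ⟨h5, h6⟩ | ⟨h5, h6⟩ <;>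
      rcases dl_intL_cases hb hw'p (Ne.symm hw'b) with ⟨h7, h8⟩ | ⟨h7, h8⟩ <;>
      omega
  · push_neg at hex
    have hsub : T ⊆ {b} := fun z hz => hex z hz
    rw [induced_subsingleton hsub, induced_subsingleton hsub]

lemma orbit_eq_of_isOrbit {A : Set (Fin (p + q))} (hA : IsOrbit τ A) (hb : b ∈ A) :
    A = {w | τ.SameCycle b w} := by
  obtain ⟨a, rfl⟩ := hA
  exact orbit_eq hb

lemma annStandard_first (hstd : DiscStandardRel (finRotate (p + q)) τ)
    {A : Set (Fin (p + q))} (hA : IsOrbit τ A) :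
    (∀ b ∈ A ∩ extSet p q,
        induced (⇑τ) (A ∩ extSet p q) b = induced (⇑(gammaExt p q)) (A ∩ extSet p q) b) ∧
    (∀ b ∈ A ∩ intSet p q,
        induced (⇑τ) (A ∩ intSet p q) b = induced (⇑(gammaInt p q)) (A ∩ intSet p q) b) := by
  constructor
  · rintro b ⟨hbA, hbe⟩
    have hAb := orbit_eq_of_isOrbit hA hbA
    have hred := induced_reduce hstd b (A ∩ extSet p q)
    rw [← hAb] at hred
    rw [Set.inter_eq_self_of_subset_left (Set.inter_subset_left)] at hred
    rw [hred]
    exact gamma0_eq_gammaExt Set.inter_subset_right hbe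
  · rintro b ⟨hbA, hbe⟩
    have hAb := orbit_eq_of_isOrbit hA hbA
    have hred := induced_reduce hstd b (A ∩ intSet p q)
    rw [← hAb] at hred
    rw [Set.inter_eq_self_of_subset_left (Set.inter_subset_left)] at hred
    rw [hred]
    exact gamma0_eq_gammaInt Set.inter_subset_right hbe

lemma tau_apply_min (hstd : DiscStandardRel (finRotate (p + q)) τ)
    {A : Set (Fin (p + q))} (hA : IsOrbit τ A) {a b : Fin (p + q)} (ha : a ∈ A)
    (hb : b ∈ A) (hba : b ≠ a) :
    τ a ∈ A ∧ τ a ≠ a ∧ ∀ w ∈ A, w ≠ a → dO a (τ a) ≤ dO a w := by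
  have hAa := orbit_eq_of_isOrbit hA ha
  have hta : τ a ∈ A := by
    rw [hAa]
    exact sameCycle_iterate τ a 1
  have h1 : induced (⇑τ) A a = τ a :=
    induced_eq_of Nat.one_pos hta (fun j hj hj1 => by omega)
  have hred := induced_reduce hstd a A
  rw [← hAa, Set.inter_self, h1] at hred
  obtain ⟨hne, hmem, hmin⟩ := gamma0_min (T := A) (b := a) hb hba
  rw [← hred] at hne hmin
  exact ⟨hta, hne, hmin⟩

end Main2


section Main3
variable {p q : ℕ} {τ : Equiv.Perm (Fin (p + q))}

lemma annStandard_second (hstd : DiscStandardRel (finRotate (p + q)) τ)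
    {A : Set (Fin (p + q))} (hA : IsOrbit τ A)
    (hext : (A ∩ extSet p q).Nonempty) (hint : (A ∩ intSet p q).Nonempty) :
    (∃! a, a ∈ A ∩ extSet p q ∧ τ a ∈ intSet p q) ∧
    (∃! a, a ∈ A ∩ intSet p q ∧ τ a ∈ extSet p q) := by
  obtain ⟨i0, hi0A, hi0⟩ := hint
  obtain ⟨e0, he0A, he0⟩ := hext
  have hi0e : p ≤ i0.val := hi0
  have he0e : e0.val < p := he0
  constructor
  · -- external side: the maximum of A ∩ extSet
    obtain ⟨aM, haM, hmax⟩ :=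
      Set.Finite.exists_maximalFor (fun z : Fin (p + q) => z.val) (A ∩ extSet p q)
        (Set.toFinite _) ⟨e0, he0A, he0⟩
    have haMA : aM ∈ A := haM.1
    have haMe : aM.val < p := haM.2
    have hi0ne : i0 ≠ aM := fun h => by rw [h] at hi0e; omega
    obtain ⟨htA, htne, htmin⟩ := tau_apply_min hstd hA haMA hi0A hi0ne
    have hmax' : ∀ a' ∈ A ∩ extSet p q, a' ≠ aM → a'.val < aM.val := by
      intro a' ha' hne
      rcases lt_or_ge a'.val aM.val with h | h
      · exact h
      · exact absurd (Fin.ext (le_antisymm h (hmax ha' h))).symm hne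
    have htint : p ≤ (τ aM).val := by
      by_contra hc
      push_neg at hc
      have htAe : τ aM ∈ A ∩ extSet p q := ⟨htA, hc⟩
      have hlt : (τ aM).val < aM.val := hmax' _ htAe htne
      have hd := htmin i0 hi0A hi0ne
      have hn := i0.isLt
      rcases dO_cases (Ne.symm htne) with ⟨h1, h2⟩ | ⟨h1, h2⟩ <;>
        rcases dO_cases (u := aM) (v := i0) (fun h => hi0ne h.symm) with ⟨h3, h4⟩ | ⟨h3, h4⟩ <;>
        omega
    refine ⟨aM, ⟨⟨haMA, haMe⟩, htint⟩, ?_⟩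
    rintro a ⟨⟨haA, hae⟩, hat⟩
    by_contra hne
    have hae' : a.val < p := hae
    have halt : a.val < aM.val := hmax' a ⟨haA, hae⟩ hne
    have haMne : aM ≠ a := fun h => hne h.symm
    obtain ⟨htA2, htne2, htmin2⟩ := tau_apply_min hstd hA haA haMA haMne
    have hd := htmin2 aM haMA haMne
    have hat' : p ≤ (τ a).val := hat
    have hn := (τ a).isLt
    rcases dO_cases (u := a) (v := τ a) (Ne.symm htne2) with ⟨h1, h2⟩ | ⟨h1, h2⟩ <;>
      rcases dO_cases (u := a) (v := aM) (fun h => haMne h.symm) with ⟨h3, h4⟩ | ⟨h3, h4⟩ <;>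
      omega
  · -- internal side: the maximum of A ∩ intSet
    obtain ⟨aM, haM, hmax⟩ :=
      Set.Finite.exists_maximalFor (fun z : Fin (p + q) => z.val) (A ∩ intSet p q)
        (Set.toFinite _) ⟨i0, hi0A, hi0⟩
    have haMA : aM ∈ A := haM.1
    have haMe : p ≤ aM.val := haM.2
    have he0ne : e0 ≠ aM := fun h => by rw [h] at he0e; omega
    obtain ⟨htA, htne, htmin⟩ := tau_apply_min hstd hA haMA he0A he0ne
    have hmax' : ∀ a' ∈ A ∩ intSet p q, a' ≠ aM → a'.val < aM.val := by
      intro a' ha' hne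
      rcases lt_or_ge a'.val aM.val with h | h
      · exact h
      · exact absurd (Fin.ext (le_antisymm h (hmax ha' h))).symm hne
    have htext : (τ aM).val < p := by
      by_contra hc
      push_neg at hc
      have htAe : τ aM ∈ A ∩ intSet p q := ⟨htA, hc⟩
      have hlt : (τ aM).val < aM.val := hmax' _ htAe htne
      have hd := htmin e0 he0A he0ne
      have hn := aM.isLt
      rcases dO_cases (Ne.symm htne) with ⟨h1, h2⟩ | ⟨h1, h2⟩ <;>
        rcases dO_cases (u := aM) (v := e0) (fun h => he0ne h.symm) with ⟨h3, h4⟩ | ⟨h3, h4⟩ <;>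
        omega
    refine ⟨aM, ⟨⟨haMA, haMe⟩, htext⟩, ?_⟩
    rintro a ⟨⟨haA, hae⟩, hat⟩
    by_contra hne
    have hae' : p ≤ a.val := hae
    have halt : a.val < aM.val := hmax' a ⟨haA, hae⟩ hne
    have haMne : aM ≠ a := fun h => hne h.symm
    obtain ⟨htA2, htne2, htmin2⟩ := tau_apply_min hstd hA haA haMA haMne
    have hd := htmin2 aM haMA haMne
    have hat' : (τ a).val < p := hat
    have hn := aM.isLt
    rcases dO_cases (u := a) (v := τ a) (Ne.symm htne2) with ⟨h1, h2⟩ | ⟨h1, h2⟩ <;>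
      rcases dO_cases (u := a) (v := aM) (fun h => haMne h.symm) with ⟨h3, h4⟩ | ⟨h3, h4⟩ <;>
      omega

end Main3



set_option maxHeartbeats 1000000 in
/-- stage 1 for a 3-cycle: minimizer facts pin the cyclic order `(a,b,c)`. -/
lemma rot3 {L ia ib ic dab dac dbc dba dca dcb : ℕ}
    (hia : ia < L) (hib : ib < L) (hic : ic < L)
    (h1 : ia ≠ ib) (h2 : ia ≠ ic) (h3 : ib ≠ ic)
    (cab : (ia < ib ∧ dab = ib - ia) ∨ (ib < ia ∧ dab = ib + L - ia))
    (cac : (ia < ic ∧ dac = ic - ia) ∨ (ic < ia ∧ dac = ic + L - ia))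
    (cbc : (ib < ic ∧ dbc = ic - ib) ∨ (ic < ib ∧ dbc = ic + L - ib))
    (cba : (ib < ia ∧ dba = ia - ib) ∨ (ia < ib ∧ dba = ia + L - ib))
    (cca : (ic < ia ∧ dca = ia - ic) ∨ (ia < ic ∧ dca = ia + L - ic))
    (ccb : (ic < ib ∧ dcb = ib - ic) ∨ (ib < ic ∧ dcb = ib + L - ic))
    (m1 : dab ≤ dac) (m2 : dbc ≤ dba) (m3 : dca ≤ dcb) :
    (ia < ib ∧ ib < ic) ∨ (ib < ic ∧ ic < ia) ∨ (ic < ia ∧ ia < ib) := by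
  omega

set_option maxHeartbeats 1000000 in
/-- stage 1 for a 4-cycle: minimizer facts pin the cyclic order `(a,b,c,d)`. -/
lemma rot4 {L ia ib ic id dab dac dad dbc dbd dba dcd dca dcb dda ddb ddc : ℕ}
    (hia : ia < L) (hib : ib < L) (hic : ic < L) (hid : id < L)
    (h1 : ia ≠ ib) (h2 : ia ≠ ic) (h3 : ia ≠ id) (h4 : ib ≠ ic) (h5 : ib ≠ id) (h6 : ic ≠ id)
    (cab : (ia < ib ∧ dab = ib - ia) ∨ (ib < ia ∧ dab = ib + L - ia))
    (cac : (ia < ic ∧ dac = ic - ia) ∨ (ic < ia ∧ dac = ic + L - ia))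
    (cad : (ia < id ∧ dad = id - ia) ∨ (id < ia ∧ dad = id + L - ia))
    (cbc : (ib < ic ∧ dbc = ic - ib) ∨ (ic < ib ∧ dbc = ic + L - ib))
    (cbd : (ib < id ∧ dbd = id - ib) ∨ (id < ib ∧ dbd = id + L - ib))
    (cba : (ib < ia ∧ dba = ia - ib) ∨ (ia < ib ∧ dba = ia + L - ib))
    (ccd : (ic < id ∧ dcd = id - ic) ∨ (id < ic ∧ dcd = id + L - ic))
    (cca : (ic < ia ∧ dca = ia - ic) ∨ (ia < ic ∧ dca = ia + L - ic))
    (ccb : (ic < ib ∧ dcb = ib - ic) ∨ (ib < ic ∧ dcb = ib + L - ic))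
    (cda : (id < ia ∧ dda = ia - id) ∨ (ia < id ∧ dda = ia + L - id))
    (cdb : (id < ib ∧ ddb = ib - id) ∨ (ib < id ∧ ddb = ib + L - id))
    (cdc : (id < ic ∧ ddc = ic - id) ∨ (ic < id ∧ ddc = ic + L - id))
    (m1 : dab ≤ dac) (m2 : dab ≤ dad) (m3 : dbc ≤ dbd) (m4 : dbc ≤ dba)
    (m5 : dcd ≤ dca) (m6 : dcd ≤ dcb) (m7 : dda ≤ ddb) (m8 : dda ≤ ddc) :
    (ia < ib ∧ ib < ic ∧ ic < id) ∨ (ib < ic ∧ ic < id ∧ id < ia) ∨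
    (ic < id ∧ id < ia ∧ ia < ib) ∨ (id < ia ∧ ia < ib ∧ ib < ic) := by
  omega


set_option maxHeartbeats 3200000 in
/-- stage 2 for (AC-3), positions sorted: extract a crossing pattern. -/
lemma ac3_core {p q av bv cv dv xv yv ia ib ic id : ℕ}
    (hx : xv < p) (hy : p ≤ yv) (hyn : yv < p + q)
    (han : av < p + q) (hbn : bv < p + q) (hcn : cv < p + q) (hdn : dv < p + q)
    (d1 : av ≠ bv) (d2 : av ≠ cv) (d3 : av ≠ dv) (d4 : av ≠ xv) (d5 : av ≠ yv)
    (d6 : bv ≠ cv) (d7 : bv ≠ dv) (d8 : bv ≠ xv) (d9 : bv ≠ yv)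
    (d10 : cv ≠ dv) (d11 : cv ≠ xv) (d12 : cv ≠ yv) (d13 : dv ≠ xv) (d14 : dv ≠ yv)
    (ha : (av < p ∧ ((xv < av ∧ ia = av - xv - 1) ∨ (av < xv ∧ ia = av + p - 1 - xv))) ∨
          (p ≤ av ∧ ((yv < av ∧ ia = (p-1) + (av - yv - 1)) ∨
            (av < yv ∧ ia = (p-1) + (av + q - 1 - yv)))))
    (hb : (bv < p ∧ ((xv < bv ∧ ib = bv - xv - 1) ∨ (bv < xv ∧ ib = bv + p - 1 - xv))) ∨
          (p ≤ bv ∧ ((yv < bv ∧ ib = (p-1) + (bv - yv - 1)) ∨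
            (bv < yv ∧ ib = (p-1) + (bv + q - 1 - yv)))))
    (hc : (cv < p ∧ ((xv < cv ∧ ic = cv - xv - 1) ∨ (cv < xv ∧ ic = cv + p - 1 - xv))) ∨
          (p ≤ cv ∧ ((yv < cv ∧ ic = (p-1) + (cv - yv - 1)) ∨
            (cv < yv ∧ ic = (p-1) + (cv + q - 1 - yv)))))
    (hd : (dv < p ∧ ((xv < dv ∧ id = dv - xv - 1) ∨ (dv < xv ∧ id = dv + p - 1 - xv))) ∨
          (p ≤ dv ∧ ((yv < dv ∧ id = (p-1) + (dv - yv - 1)) ∨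
            (dv < yv ∧ id = (p-1) + (dv + q - 1 - yv)))))
    (hrot : ia < ib ∧ ib < ic ∧ ic < id) :
    (av < bv ∧ bv < cv ∧ cv < dv) ∨ (bv < cv ∧ cv < dv ∧ dv < av) ∨
    (cv < dv ∧ dv < av ∧ av < bv) ∨ (dv < av ∧ av < bv ∧ bv < cv) ∨
    (xv < av ∧ av < yv ∧ yv < cv) ∨ (bv < xv ∧ xv < dv ∧ dv < yv) ∨
    (xv < dv ∧ dv < yv ∧ yv < bv) ∨ (cv < xv ∧ xv < av ∧ av < yv) := by
  rcases ha with ⟨hs1, hp1 | hp1⟩ | ⟨hs1, hp1 | hp1⟩ <;>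
    rcases hb with ⟨hs2, hp2 | hp2⟩ | ⟨hs2, hp2 | hp2⟩ <;>
    rcases hc with ⟨hs3, hp3 | hp3⟩ | ⟨hs3, hp3 | hp3⟩ <;>
    rcases hd with ⟨hs4, hp4 | hp4⟩ | ⟨hs4, hp4 | hp4⟩ <;>
    (first
      | (left; omega)
      | (right; left; omega)
      | (right; right; left; omega)
      | (right; right; right; left; omega)
      | (right; right; right; right; left; omega)
      | (right; right; right; right; right; left; omega)
      | (right; right; right; right; right; right; left; omega)
      | (right; right; right; right; right; right; right; omega))

/-- stage 2 for (AC-2), positions sorted: extract a crossing pattern. -/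
lemma ac2_core {p q av bv cv xv yv ia ib ic : ℕ}
    (hx : xv < p) (hy : p ≤ yv) (hyn : yv < p + q)
    (han : av < p + q) (hbn : bv < p + q) (hcn : cv < p + q)
    (d1 : av ≠ bv) (d2 : av ≠ cv) (d4 : av ≠ xv) (d5 : av ≠ yv)
    (d6 : bv ≠ cv) (d8 : bv ≠ xv) (d9 : bv ≠ yv) (d11 : cv ≠ xv) (d12 : cv ≠ yv)
    (ha : (av < p ∧ ((xv < av ∧ ia = av - xv - 1) ∨ (av < xv ∧ ia = av + p - 1 - xv))) ∨
          (p ≤ av ∧ ((yv < av ∧ ia = (p-1) + (av - yv - 1)) ∨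
            (av < yv ∧ ia = (p-1) + (av + q - 1 - yv)))))
    (hb : (bv < p ∧ ((xv < bv ∧ ib = bv - xv - 1) ∨ (bv < xv ∧ ib = bv + p - 1 - xv))) ∨
          (p ≤ bv ∧ ((yv < bv ∧ ib = (p-1) + (bv - yv - 1)) ∨
            (bv < yv ∧ ib = (p-1) + (bv + q - 1 - yv)))))
    (hc : (cv < p ∧ ((xv < cv ∧ ic = cv - xv - 1) ∨ (cv < xv ∧ ic = cv + p - 1 - xv))) ∨
          (p ≤ cv ∧ ((yv < cv ∧ ic = (p-1) + (cv - yv - 1)) ∨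
            (cv < yv ∧ ic = (p-1) + (cv + q - 1 - yv)))))
    (hrot : ia < ib ∧ ib < ic)
    (hrotg : (av < cv ∧ cv < bv) ∨ (cv < bv ∧ bv < av) ∨ (bv < av ∧ av < cv)) :
    (bv < xv ∧ xv < av ∧ av < yv) ∨ (xv < cv ∧ cv < yv ∧ yv < bv) := by
  rcases ha with ⟨hs1, hp1 | hp1⟩ | ⟨hs1, hp1 | hp1⟩ <;>
    rcases hb with ⟨hs2, hp2 | hp2⟩ | ⟨hs2, hp2 | hp2⟩ <;>
    rcases hc with ⟨hs3, hp3 | hp3⟩ | ⟨hs3, hp3 | hp3⟩ <;>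
    omega


section Finishers
variable {n : ℕ} {τ : Equiv.Perm (Fin n)} {a b c d x y : Fin n}

lemma apply_cross (hnc : OrbitsNoCrossing τ) {u1 u2 u3 u4 : Fin n}
    (h12 : u1.val < u2.val) (h23 : u2.val < u3.val) (h34 : u3.val < u4.val)
    (sc13 : τ.SameCycle u1 u3) (sc24 : τ.SameCycle u2 u4) (nsc : ¬ τ.SameCycle u1 u2) :
    False :=
  hnc ⟨u1, u2, u3, u4, h12, h23, h34, sc13, sc24, nsc⟩

lemma rot_cross (hnc : OrbitsNoCrossing τ)
    (scac : τ.SameCycle a c) (scbd : τ.SameCycle b d) (nab : ¬ τ.SameCycle a b)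
    (h : (a.val < b.val ∧ b.val < c.val ∧ c.val < d.val) ∨
         (b.val < c.val ∧ c.val < d.val ∧ d.val < a.val) ∨
         (c.val < d.val ∧ d.val < a.val ∧ a.val < b.val) ∨
         (d.val < a.val ∧ a.val < b.val ∧ b.val < c.val)) : False := by
  have nbc : ¬ τ.SameCycle b c := fun hsc => nab (scac.trans hsc.symm)
  have ncd : ¬ τ.SameCycle c d := fun hsc => nab (scac.trans (hsc.trans scbd.symm))
  have nda : ¬ τ.SameCycle d a := fun hsc => nab (hsc.symm.trans scbd.symm)
  rcases h with ⟨h1, h2, h3⟩ | ⟨h1, h2, h3⟩ | ⟨h1, h2, h3⟩ | ⟨h1, h2, h3⟩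
  · exact apply_cross hnc h1 h2 h3 scac scbd nab
  · exact apply_cross hnc h1 h2 h3 scbd scac.symm nbc
  · exact apply_cross hnc h1 h2 h3 scac.symm scbd.symm ncd
  · exact apply_cross hnc h1 h2 h3 scbd.symm scac nda

lemma ac3_finish (hnc : OrbitsNoCrossing τ)
    (scac : τ.SameCycle a c) (scbd : τ.SameCycle b d) (scxy : τ.SameCycle x y)
    (nab : ¬ τ.SameCycle a b) (nax : ¬ τ.SameCycle a x) (nbx : ¬ τ.SameCycle b x)
    (ncx : ¬ τ.SameCycle c x) (ndx : ¬ τ.SameCycle d x)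
    (h : (a.val < b.val ∧ b.val < c.val ∧ c.val < d.val) ∨
         (b.val < c.val ∧ c.val < d.val ∧ d.val < a.val) ∨
         (c.val < d.val ∧ d.val < a.val ∧ a.val < b.val) ∨
         (d.val < a.val ∧ a.val < b.val ∧ b.val < c.val) ∨
         (x.val < a.val ∧ a.val < y.val ∧ y.val < c.val) ∨
         (b.val < x.val ∧ x.val < d.val ∧ d.val < y.val) ∨
         (x.val < d.val ∧ d.val < y.val ∧ y.val < b.val) ∨
         (c.val < x.val ∧ x.val < a.val ∧ a.val < y.val)) : False := by
  rcases h with h | h | h | h | ⟨h1, h2, h3⟩ | ⟨h1, h2, h3⟩ | ⟨h1, h2, h3⟩ | ⟨h1, h2, h3⟩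
  · exact rot_cross hnc scac scbd nab (Or.inl h)
  · exact rot_cross hnc scac scbd nab (Or.inr (Or.inl h))
  · exact rot_cross hnc scac scbd nab (Or.inr (Or.inr (Or.inl h)))
  · exact rot_cross hnc scac scbd nab (Or.inr (Or.inr (Or.inr h)))
  · exact apply_cross hnc h1 h2 h3 scxy scac (fun hsc => nax hsc.symm)
  · exact apply_cross hnc h1 h2 h3 scbd scxy nbx
  · exact apply_cross hnc h1 h2 h3 scxy scbd.symm (fun hsc => ndx hsc.symm)
  · exact apply_cross hnc h1 h2 h3 scac.symm scxy ncx

lemma ac2_finish (hnc : OrbitsNoCrossing τ)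
    (scab : τ.SameCycle a b) (scbc : τ.SameCycle b c) (scxy : τ.SameCycle x y)
    (nax : ¬ τ.SameCycle a x) (nbx : ¬ τ.SameCycle b x) (ncx : ¬ τ.SameCycle c x)
    (h : (b.val < x.val ∧ x.val < a.val ∧ a.val < y.val) ∨
         (x.val < c.val ∧ c.val < y.val ∧ y.val < b.val)) : False := by
  rcases h with ⟨h1, h2, h3⟩ | ⟨h1, h2, h3⟩
  · exact apply_cross hnc h1 h2 h3 scab.symm scxy nbx
  · exact apply_cross hnc h1 h2 h3 scxy scbc.symm (fun hsc => ncx hsc.symm)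

lemma pairwise4 {α : Type*} {a b c d : α} (h : List.Pairwise (· ≠ ·) [a, b, c, d]) :
    a ≠ b ∧ a ≠ c ∧ a ≠ d ∧ b ≠ c ∧ b ≠ d ∧ c ≠ d := by
  simp only [List.pairwise_cons] at h
  obtain ⟨h1, h2, h3, -⟩ := h
  exact ⟨h1 b (by simp), h1 c (by simp), h1 d (by simp), h2 c (by simp), h2 d (by simp),
    h3 d (by simp)⟩

lemma pairwise5 {α : Type*} {a b c d e : α} (h : List.Pairwise (· ≠ ·) [a, b, c, d, e]) :
    a ≠ b ∧ a ≠ c ∧ a ≠ d ∧ a ≠ e ∧ b ≠ c ∧ b ≠ d ∧ b ≠ e ∧ c ≠ d ∧ c ≠ e ∧ d ≠ e := by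
  simp only [List.pairwise_cons] at h
  obtain ⟨h1, h2, h3, h4, -⟩ := h
  exact ⟨h1 b (by simp), h1 c (by simp), h1 d (by simp), h1 e (by simp), h2 c (by simp),
    h2 d (by simp), h2 e (by simp), h3 d (by simp), h3 e (by simp), h4 e (by simp)⟩

lemma pairwise6 {α : Type*} {a b c d e f : α} (h : List.Pairwise (· ≠ ·) [a, b, c, d, e, f]) :
    a ≠ b ∧ a ≠ c ∧ a ≠ d ∧ a ≠ e ∧ a ≠ f ∧ b ≠ c ∧ b ≠ d ∧ b ≠ e ∧ b ≠ f ∧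
    c ≠ d ∧ c ≠ e ∧ c ≠ f ∧ d ≠ e ∧ d ≠ f ∧ e ≠ f := by
  simp only [List.pairwise_cons] at h
  obtain ⟨h1, h2, h3, h4, h5, -⟩ := h
  exact ⟨h1 b (by simp), h1 c (by simp), h1 d (by simp), h1 e (by simp), h1 f (by simp),
    h2 c (by simp), h2 d (by simp), h2 e (by simp), h2 f (by simp), h3 d (by simp),
    h3 e (by simp), h3 f (by simp), h4 e (by simp), h4 f (by simp), h5 f (by simp)⟩

end Finishers

section Sides
variable {p q : ℕ} {S : Set (Fin (p + q))} {a v : Fin (p + q)}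

lemma induced_gammaExt_side (ha : a.val < p)
    (h : induced (⇑(gammaExt p q)) S a = v) (hva : v ≠ a) : v.val < p := by
  by_cases hex : ∃ k, 0 < k ∧ (⇑(gammaExt p q))^[k] a ∈ S
  · rw [induced_of_exists hex] at h
    rw [← h]
    exact gammaExt_iter_lt ha _
  · rw [induced_of_not_exists hex] at h
    exact absurd h.symm hva

lemma induced_gammaInt_side (ha : p ≤ a.val)
    (h : induced (⇑(gammaInt p q)) S a = v) (hva : v ≠ a) : p ≤ v.val := by
  by_cases hex : ∃ k, 0 < k ∧ (⇑(gammaInt p q))^[k] a ∈ S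
  · rw [induced_of_exists hex] at h
    rw [← h]
    exact gammaInt_iter_ge ha _
  · rw [induced_of_not_exists hex] at h
    exact absurd h.symm hva

lemma induced_gammaAnn_ext (ha : a.val < p) :
    induced (⇑(gammaAnn p q)) S a = induced (⇑(gammaExt p q)) S a :=
  induced_congr_fun (fun k => gammaAnn_iter_ext ha k)

lemma induced_gammaAnn_int (ha : p ≤ a.val) :
    induced (⇑(gammaAnn p q)) S a = induced (⇑(gammaInt p q)) S a :=
  induced_congr_fun (fun k => gammaAnn_iter_int ha k)

lemma shift_case {P Q u v dd : ℕ} (hu : P ≤ u) (hv : P ≤ v)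
    (h : (u < v ∧ dd = v - u) ∨ (v < u ∧ dd = v + Q - u)) :
    (u - P < v - P ∧ dd = (v - P) - (u - P)) ∨
    (v - P < u - P ∧ dd = (v - P) + Q - (u - P)) := by omega

end Sides

section NoAC1
variable {p q : ℕ} {τ : Equiv.Perm (Fin (p + q))}

lemma no_AC1 (hstd : DiscStandardRel (finRotate (p + q)) τ) (hnc : OrbitsNoCrossing τ) :
    ¬ AC1 p q τ := by
  rintro ⟨a, b, c, d, hpw, hcyc, hswap⟩
  obtain ⟨nab, nac, nad, nbc, nbd, ncd⟩ := pairwise4 hpw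
  set S : Set (Fin (p + q)) := {a, b, c, d} with hSdef
  have haS : a ∈ S := by simp [hSdef]
  have hbS : b ∈ S := by simp [hSdef]
  have hcS : c ∈ S := by simp [hSdef]
  have hdS : d ∈ S := by simp [hSdef]
  have scac : τ.SameCycle a c := sameCycle_of_induced hswap.1 (Ne.symm nac)
  have scbd : τ.SameCycle b d := sameCycle_of_induced hswap.2.2.1 (Ne.symm nbd)
  by_cases hab : τ.SameCycle a b
  · exact tau_two_cycle_contra hstd hswap.1 hswap.2.1 (Ne.symm nac) hbS hab nab.symm nbc
  -- main case: a, c and b, d lie in two different orbits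
  have hvab := Fin.val_ne_of_ne nab
  have hvac := Fin.val_ne_of_ne nac
  have hvad := Fin.val_ne_of_ne nad
  have hvbc := Fin.val_ne_of_ne nbc
  have hvbd := Fin.val_ne_of_ne nbd
  have hvcd := Fin.val_ne_of_ne ncd
  rcases Nat.lt_or_ge a.val p with ha | ha
  · -- all four external
    have e1 : induced (⇑(gammaExt p q)) S a = b := (induced_gammaAnn_ext ha).symm.trans hcyc.1
    have hb : b.val < p := induced_gammaExt_side ha e1 nab.symm
    have e2 : induced (⇑(gammaExt p q)) S b = c :=
      (induced_gammaAnn_ext hb).symm.trans hcyc.2.1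
    have hc : c.val < p := induced_gammaExt_side hb e2 nbc.symm
    have e3 : induced (⇑(gammaExt p q)) S c = d :=
      (induced_gammaAnn_ext hc).symm.trans hcyc.2.2.1
    have hd : d.val < p := induced_gammaExt_side hc e3 ncd.symm
    have e4 : induced (⇑(gammaExt p q)) S d = a :=
      (induced_gammaAnn_ext hd).symm.trans hcyc.2.2.2
    rw [gammaExt_eq_formPerm] at e1 e2 e3 e4
    have ma := formPerm_min nodup_extL (mem_extL.mpr ha) hbS (mem_extL.mpr hb) nab.symm
    rw [e1] at ma
    have mb := formPerm_min nodup_extL (mem_extL.mpr hb) hcS (mem_extL.mpr hc) nbc.symm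
    rw [e2] at mb
    have mc := formPerm_min nodup_extL (mem_extL.mpr hc) hdS (mem_extL.mpr hd) ncd.symm
    rw [e3] at mc
    have md := formPerm_min nodup_extL (mem_extL.mpr hd) haS (mem_extL.mpr ha) nad
    rw [e4] at md
    have m1 := ma.2.2.2 c hcS (mem_extL.mpr hc) nac.symm
    have m2 := ma.2.2.2 d hdS (mem_extL.mpr hd) nad.symm
    have m3 := mb.2.2.2 d hdS (mem_extL.mpr hd) nbd.symm
    have m4 := mb.2.2.2 a haS (mem_extL.mpr ha) nab
    have m5 := mc.2.2.2 a haS (mem_extL.mpr ha) nac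
    have m6 := mc.2.2.2 b hbS (mem_extL.mpr hb) nbc
    have m7 := md.2.2.2 b hbS (mem_extL.mpr hb) nbd
    have m8 := md.2.2.2 c hcS (mem_extL.mpr hc) ncd
    have hrot := rot4 ha hb hc hd hvab hvac hvad hvbc hvbd hvcd
      (dl_extL_cases ha hb nab) (dl_extL_cases ha hc nac) (dl_extL_cases ha hd nad)
      (dl_extL_cases hb hc nbc) (dl_extL_cases hb hd nbd) (dl_extL_cases hb ha nab.symm)
      (dl_extL_cases hc hd ncd) (dl_extL_cases hc ha nac.symm) (dl_extL_cases hc hb nbc.symm)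
      (dl_extL_cases hd ha nad.symm) (dl_extL_cases hd hb nbd.symm) (dl_extL_cases hd hc ncd.symm)
      m1 m2 m3 m4 m5 m6 m7 m8
    exact rot_cross hnc scac scbd hab hrot
  · -- all four internal
    have e1 : induced (⇑(gammaInt p q)) S a = b := (induced_gammaAnn_int ha).symm.trans hcyc.1
    have hb : p ≤ b.val := induced_gammaInt_side ha e1 nab.symm
    have e2 : induced (⇑(gammaInt p q)) S b = c :=
      (induced_gammaAnn_int hb).symm.trans hcyc.2.1
    have hc : p ≤ c.val := induced_gammaInt_side hb e2 nbc.symm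
    have e3 : induced (⇑(gammaInt p q)) S c = d :=
      (induced_gammaAnn_int hc).symm.trans hcyc.2.2.1
    have hd : p ≤ d.val := induced_gammaInt_side hc e3 ncd.symm
    have e4 : induced (⇑(gammaInt p q)) S d = a :=
      (induced_gammaAnn_int hd).symm.trans hcyc.2.2.2
    rw [gammaInt_eq_formPerm] at e1 e2 e3 e4
    have ma := formPerm_min nodup_intL (mem_intL.mpr ha) hbS (mem_intL.mpr hb) nab.symm
    rw [e1] at ma
    have mb := formPerm_min nodup_intL (mem_intL.mpr hb) hcS (mem_intL.mpr hc) nbc.symm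
    rw [e2] at mb
    have mc := formPerm_min nodup_intL (mem_intL.mpr hc) hdS (mem_intL.mpr hd) ncd.symm
    rw [e3] at mc
    have md := formPerm_min nodup_intL (mem_intL.mpr hd) haS (mem_intL.mpr ha) nad
    rw [e4] at md
    have m1 := ma.2.2.2 c hcS (mem_intL.mpr hc) nac.symm
    have m2 := ma.2.2.2 d hdS (mem_intL.mpr hd) nad.symm
    have m3 := mb.2.2.2 d hdS (mem_intL.mpr hd) nbd.symm
    have m4 := mb.2.2.2 a haS (mem_intL.mpr ha) nab
    have m5 := mc.2.2.2 a haS (mem_intL.mpr ha) nac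
    have m6 := mc.2.2.2 b hbS (mem_intL.mpr hb) nbc
    have m7 := md.2.2.2 b hbS (mem_intL.mpr hb) nbd
    have m8 := md.2.2.2 c hcS (mem_intL.mpr hc) ncd
    have han := a.isLt
    have hbn := b.isLt
    have hcn := c.isLt
    have hdn := d.isLt
    have hrot := rot4 (L := q) (ia := a.val - p) (ib := b.val - p) (ic := c.val - p)
      (id := d.val - p) (by omega) (by omega) (by omega) (by omega)
      (by omega) (by omega) (by omega) (by omega) (by omega) (by omega)
      (shift_case ha hb (dl_intL_cases ha hb nab))
      (shift_case ha hc (dl_intL_cases ha hc nac))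
      (shift_case ha hd (dl_intL_cases ha hd nad))
      (shift_case hb hc (dl_intL_cases hb hc nbc))
      (shift_case hb hd (dl_intL_cases hb hd nbd))
      (shift_case hb ha (dl_intL_cases hb ha nab.symm))
      (shift_case hc hd (dl_intL_cases hc hd ncd))
      (shift_case hc ha (dl_intL_cases hc ha nac.symm))
      (shift_case hc hb (dl_intL_cases hc hb nbc.symm))
      (shift_case hd ha (dl_intL_cases hd ha nad.symm))
      (shift_case hd hb (dl_intL_cases hd hb nbd.symm))
      (shift_case hd hc (dl_intL_cases hd hc ncd.symm))
      m1 m2 m3 m4 m5 m6 m7 m8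
    exact rot_cross hnc scac scbd hab (by omega)

end NoAC1


section NoAC23
variable {p q : ℕ} {τ : Equiv.Perm (Fin (p + q))}

set_option maxHeartbeats 1600000 in
lemma no_AC2 (hstd : DiscStandardRel (finRotate (p + q)) τ) (hnc : OrbitsNoCrossing τ) :
    ¬ AC2 p q τ := by
  rintro ⟨a, b, c, x, y, hpw, hxe, hyi, hlam, hcyc, hswap⟩
  obtain ⟨nab, nac, nax, nay, nbc, nbx, nby, ncx, ncy, nxy⟩ := pairwise5 hpw
  set S : Set (Fin (p + q)) := {a, b, c, x, y} with hSdef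
  have haS : a ∈ S := by simp [hSdef]
  have hbS : b ∈ S := by simp [hSdef]
  have hcS : c ∈ S := by simp [hSdef]
  have hx : x.val < p := hxe
  have hy : p ≤ y.val := hyi
  have scxy : τ.SameCycle x y := sameCycle_of_induced hswap.1 nxy.symm
  have scac : τ.SameCycle a c := sameCycle_of_induced hcyc.1 nac.symm
  have sccb : τ.SameCycle c b := sameCycle_of_induced hcyc.2.1 nbc
  have scab : τ.SameCycle a b := scac.trans sccb
  have naX : ¬ τ.SameCycle a x := fun hsc =>
    tau_two_cycle_contra hstd hswap.1 hswap.2 nxy.symm haS hsc.symm nax nay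
  have nbX : ¬ τ.SameCycle b x := fun hsc =>
    tau_two_cycle_contra hstd hswap.1 hswap.2 nxy.symm hbS hsc.symm nbx nby
  have ncX : ¬ τ.SameCycle c x := fun hsc =>
    tau_two_cycle_contra hstd hswap.1 hswap.2 nxy.symm hcS hsc.symm ncx ncy
  -- disc minimality facts for the orbit of a, b, c
  have g1 : dO a c ≤ dO a b := tau_min' hstd hcyc.1 nac.symm hbS scab nab.symm
  have g2 : dO c b ≤ dO c a := tau_min' hstd hcyc.2.1 nbc haS scac.symm nac
  have g3 : dO b a ≤ dO b c := tau_min' hstd hcyc.2.2 nab hcS sccb.symm nbc.symm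
  have hvab := Fin.val_ne_of_ne nab
  have hvac := Fin.val_ne_of_ne nac
  have hvbc := Fin.val_ne_of_ne nbc
  have hrotg := rot3 (L := p + q) a.isLt c.isLt b.isLt hvac hvab (fun h => hvbc h.symm)
    (dO_cases nac) (dO_cases nab) (dO_cases nbc.symm) (dO_cases nac.symm)
    (dO_cases nab.symm) (dO_cases nbc) g1 g2 g3
  -- λ-side minimality facts
  have hLa := lamL_mem_idx (z := a) hx hy nax nay
  have hLb := lamL_mem_idx (z := b) hx hy nbx nby
  have hLc := lamL_mem_idx (z := c) hx hy ncx ncy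
  have hnd := nodup_lamL (x := x) (y := y) hx hy
  rw [lamPerm_eq_formPerm] at hlam
  set T : Set (Fin (p + q)) := {a, b, c} with hTdef
  have haT : a ∈ T := by simp [hTdef]
  have hbT : b ∈ T := by simp [hTdef]
  have hcT : c ∈ T := by simp [hTdef]
  have ma := formPerm_min (T := T) hnd hLa.1 hbT hLb.1 nab.symm
  rw [hlam.1] at ma
  have mb := formPerm_min (T := T) hnd hLb.1 hcT hLc.1 nbc.symm
  rw [hlam.2.1] at mb
  have mc := formPerm_min (T := T) hnd hLc.1 haT hLa.1 nac
  rw [hlam.2.2] at mc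
  have l1 := ma.2.2.2 c hcT hLc.1 nac.symm
  have l2 := mb.2.2.2 a haT hLa.1 nab
  have l3 := mc.2.2.2 b hbT hLb.1 nbc
  have hia := List.idxOf_lt_length_iff.mpr hLa.1
  have hib := List.idxOf_lt_length_iff.mpr hLb.1
  have hic := List.idxOf_lt_length_iff.mpr hLc.1
  rw [length_lamL] at hia hib hic
  have iab : (lamL p q x y).idxOf a ≠ (lamL p q x y).idxOf b :=
    indexOf_ne hLb.1 hLa.1 nab
  have iac : (lamL p q x y).idxOf a ≠ (lamL p q x y).idxOf c :=
    indexOf_ne hLc.1 hLa.1 nac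
  have ibc : (lamL p q x y).idxOf b ≠ (lamL p q x y).idxOf c :=
    indexOf_ne hLc.1 hLb.1 nbc
  have hrotl := rot3 (L := (p - 1) + (q - 1)) hia hib hic iab iac ibc
    (dl_lamL_cases hLa.1 hLb.1 hnd nab) (dl_lamL_cases hLa.1 hLc.1 hnd nac)
    (dl_lamL_cases hLb.1 hLc.1 hnd nbc) (dl_lamL_cases hLb.1 hLa.1 hnd nab.symm)
    (dl_lamL_cases hLc.1 hLa.1 hnd nac.symm) (dl_lamL_cases hLc.1 hLb.1 hnd nbc.symm)
    l1 l2 l3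
  have hvax := Fin.val_ne_of_ne nax
  have hvay := Fin.val_ne_of_ne nay
  have hvbx := Fin.val_ne_of_ne nbx
  have hvby := Fin.val_ne_of_ne nby
  have hvcx := Fin.val_ne_of_ne ncx
  have hvcy := Fin.val_ne_of_ne ncy
  rcases hrotl with h | h | h
  · have pat := ac2_core hx hy y.isLt a.isLt b.isLt c.isLt hvab hvac hvax hvay
      hvbc hvbx hvby hvcx hvcy hLa.2 hLb.2 hLc.2 h hrotg
    exact ac2_finish hnc scab sccb.symm scxy naX nbX ncX pat
  · have pat := ac2_core hx hy y.isLt b.isLt c.isLt a.isLt hvbc (fun h' => hvab h'.symm)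
      hvbx hvby (fun h' => hvac h'.symm) hvcx hvcy hvax hvay hLb.2 hLc.2 hLa.2 h (by omega)
    exact ac2_finish hnc sccb.symm scac.symm scxy nbX ncX naX pat
  · have pat := ac2_core hx hy y.isLt c.isLt a.isLt b.isLt (fun h' => hvac h'.symm)
      (fun h' => hvbc h'.symm) hvcx hvcy hvab hvax hvay hvbx hvby hLc.2 hLa.2 hLb.2 h (by omega)
    exact ac2_finish hnc scac.symm scab scxy ncX naX nbX pat

set_option maxHeartbeats 3200000 in
lemma no_AC3 (hstd : DiscStandardRel (finRotate (p + q)) τ) (hnc : OrbitsNoCrossing τ) :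
    ¬ AC3 p q τ := by
  rintro ⟨a, b, c, d, x, y, hpw, hxe, hyi, hlam, hswap2, hswap⟩
  obtain ⟨nab, nac, nad, nax, nay, nbc, nbd, nbx, nby, ncd, ncx, ncy, ndx, ndy, nxy⟩ :=
    pairwise6 hpw
  set S : Set (Fin (p + q)) := {a, b, c, d, x, y} with hSdef
  have haS : a ∈ S := by simp [hSdef]
  have hbS : b ∈ S := by simp [hSdef]
  have hcS : c ∈ S := by simp [hSdef]
  have hdS : d ∈ S := by simp [hSdef]
  have hx : x.val < p := hxe
  have hy : p ≤ y.val := hyi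
  have scxy : τ.SameCycle x y := sameCycle_of_induced hswap.1 nxy.symm
  have scac : τ.SameCycle a c := sameCycle_of_induced hswap2.1 nac.symm
  have scbd : τ.SameCycle b d := sameCycle_of_induced hswap2.2.2.1 nbd.symm
  have naX : ¬ τ.SameCycle a x := fun hsc =>
    tau_two_cycle_contra hstd hswap.1 hswap.2 nxy.symm haS hsc.symm nax nay
  have nbX : ¬ τ.SameCycle b x := fun hsc =>
    tau_two_cycle_contra hstd hswap.1 hswap.2 nxy.symm hbS hsc.symm nbx nby
  have ncX : ¬ τ.SameCycle c x := fun hsc =>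
    tau_two_cycle_contra hstd hswap.1 hswap.2 nxy.symm hcS hsc.symm ncx ncy
  have ndX : ¬ τ.SameCycle d x := fun hsc =>
    tau_two_cycle_contra hstd hswap.1 hswap.2 nxy.symm hdS hsc.symm ndx ndy
  by_cases hab : τ.SameCycle a b
  · exact tau_two_cycle_contra hstd hswap2.1 hswap2.2.1 nac.symm hbS hab nab.symm nbc
  have nbc' : ¬ τ.SameCycle b c := fun h' => hab (scac.trans h'.symm)
  have ncd' : ¬ τ.SameCycle c d := fun h' => hab (scac.trans (h'.trans scbd.symm))
  have nda' : ¬ τ.SameCycle d a := fun h' => hab (h'.symm.trans scbd.symm)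
  -- λ-side minimality facts
  have hLa := lamL_mem_idx (z := a) hx hy nax nay
  have hLb := lamL_mem_idx (z := b) hx hy nbx nby
  have hLc := lamL_mem_idx (z := c) hx hy ncx ncy
  have hLd := lamL_mem_idx (z := d) hx hy ndx ndy
  have hnd := nodup_lamL (x := x) (y := y) hx hy
  rw [lamPerm_eq_formPerm] at hlam
  set T : Set (Fin (p + q)) := {a, b, c, d} with hTdef
  have haT : a ∈ T := by simp [hTdef]
  have hbT : b ∈ T := by simp [hTdef]
  have hcT : c ∈ T := by simp [hTdef]
  have hdT : d ∈ T := by simp [hTdef]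
  have ma := formPerm_min (T := T) hnd hLa.1 hbT hLb.1 nab.symm
  rw [hlam.1] at ma
  have mb := formPerm_min (T := T) hnd hLb.1 hcT hLc.1 nbc.symm
  rw [hlam.2.1] at mb
  have mc := formPerm_min (T := T) hnd hLc.1 hdT hLd.1 ncd.symm
  rw [hlam.2.2.1] at mc
  have md := formPerm_min (T := T) hnd hLd.1 haT hLa.1 nad
  rw [hlam.2.2.2] at md
  have m1 := ma.2.2.2 c hcT hLc.1 nac.symm
  have m2 := ma.2.2.2 d hdT hLd.1 nad.symm
  have m3 := mb.2.2.2 d hdT hLd.1 nbd.symm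
  have m4 := mb.2.2.2 a haT hLa.1 nab
  have m5 := mc.2.2.2 a haT hLa.1 nac
  have m6 := mc.2.2.2 b hbT hLb.1 nbc
  have m7 := md.2.2.2 b hbT hLb.1 nbd
  have m8 := md.2.2.2 c hcT hLc.1 ncd
  have hia := List.idxOf_lt_length_iff.mpr hLa.1
  have hib := List.idxOf_lt_length_iff.mpr hLb.1
  have hic := List.idxOf_lt_length_iff.mpr hLc.1
  have hid := List.idxOf_lt_length_iff.mpr hLd.1
  rw [length_lamL] at hia hib hic hid
  have iab : (lamL p q x y).idxOf a ≠ (lamL p q x y).idxOf b :=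
    indexOf_ne hLb.1 hLa.1 nab
  have iac : (lamL p q x y).idxOf a ≠ (lamL p q x y).idxOf c :=
    indexOf_ne hLc.1 hLa.1 nac
  have iad : (lamL p q x y).idxOf a ≠ (lamL p q x y).idxOf d :=
    indexOf_ne hLd.1 hLa.1 nad
  have ibc : (lamL p q x y).idxOf b ≠ (lamL p q x y).idxOf c :=
    indexOf_ne hLc.1 hLb.1 nbc
  have ibd : (lamL p q x y).idxOf b ≠ (lamL p q x y).idxOf d :=
    indexOf_ne hLd.1 hLb.1 nbd
  have icd : (lamL p q x y).idxOf c ≠ (lamL p q x y).idxOf d :=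
    indexOf_ne hLd.1 hLc.1 ncd
  have hrotl := rot4 (L := (p - 1) + (q - 1)) hia hib hic hid iab iac iad ibc ibd icd
    (dl_lamL_cases hLa.1 hLb.1 hnd nab) (dl_lamL_cases hLa.1 hLc.1 hnd nac)
    (dl_lamL_cases hLa.1 hLd.1 hnd nad) (dl_lamL_cases hLb.1 hLc.1 hnd nbc)
    (dl_lamL_cases hLb.1 hLd.1 hnd nbd) (dl_lamL_cases hLb.1 hLa.1 hnd nab.symm)
    (dl_lamL_cases hLc.1 hLd.1 hnd ncd) (dl_lamL_cases hLc.1 hLa.1 hnd nac.symm)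
    (dl_lamL_cases hLc.1 hLb.1 hnd nbc.symm) (dl_lamL_cases hLd.1 hLa.1 hnd nad.symm)
    (dl_lamL_cases hLd.1 hLb.1 hnd nbd.symm) (dl_lamL_cases hLd.1 hLc.1 hnd ncd.symm)
    m1 m2 m3 m4 m5 m6 m7 m8
  have hvab := Fin.val_ne_of_ne nab
  have hvac := Fin.val_ne_of_ne nac
  have hvad := Fin.val_ne_of_ne nad
  have hvax := Fin.val_ne_of_ne nax
  have hvay := Fin.val_ne_of_ne nay
  have hvbc := Fin.val_ne_of_ne nbc
  have hvbd := Fin.val_ne_of_ne nbd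
  have hvbx := Fin.val_ne_of_ne nbx
  have hvby := Fin.val_ne_of_ne nby
  have hvcd := Fin.val_ne_of_ne ncd
  have hvcx := Fin.val_ne_of_ne ncx
  have hvcy := Fin.val_ne_of_ne ncy
  have hvdx := Fin.val_ne_of_ne ndx
  have hvdy := Fin.val_ne_of_ne ndy
  rcases hrotl with h | h | h | h
  · have pat := ac3_core hx hy y.isLt a.isLt b.isLt c.isLt d.isLt
      (by omega) (by omega) (by omega) (by omega) (by omega) (by omega) (by omega)
      (by omega) (by omega) (by omega) (by omega) (by omega) (by omega) (by omega)
      hLa.2 hLb.2 hLc.2 hLd.2 h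
    exact ac3_finish hnc scac scbd scxy hab naX nbX ncX ndX pat
  · have pat := ac3_core hx hy y.isLt b.isLt c.isLt d.isLt a.isLt
      (by omega) (by omega) (by omega) (by omega) (by omega) (by omega) (by omega)
      (by omega) (by omega) (by omega) (by omega) (by omega) (by omega) (by omega)
      hLb.2 hLc.2 hLd.2 hLa.2 h
    exact ac3_finish hnc scbd scac.symm scxy nbc' nbX ncX ndX naX pat
  · have pat := ac3_core hx hy y.isLt c.isLt d.isLt a.isLt b.isLt
      (by omega) (by omega) (by omega) (by omega) (by omega) (by omega) (by omega)
      (by omega) (by omega) (by omega) (by omega) (by omega) (by omega) (by omega)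
      hLc.2 hLd.2 hLa.2 hLb.2 h
    exact ac3_finish hnc scac.symm scbd.symm scxy ncd' ncX ndX naX nbX pat
  · have pat := ac3_core hx hy y.isLt d.isLt a.isLt b.isLt c.isLt
      (by omega) (by omega) (by omega) (by omega) (by omega) (by omega) (by omega)
      (by omega) (by omega) (by omega) (by omega) (by omega) (by omega) (by omega)
      hLd.2 hLa.2 hLb.2 hLc.2 h
    exact ac3_finish hnc scbd.symm scac scxy nda' ndX naX nbX ncX pat

end NoAC23


/-- Lemma 5.2 2°: `S_disc-nc(p+q) ⊆ S_ann-nc(p,q)`. -/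
theorem stmt_13 (p q : ℕ) (hp : 0 < p) (hq : 0 < q)
    (τ : Equiv.Perm (Fin (p + q))) (h : DiscNC τ) :
    AnnNC p q τ := by
  obtain ⟨hstd, hnc⟩ := h
  exact ⟨⟨fun A hA => annStandard_first hstd hA,
      fun A hA hext hint => annStandard_second hstd hA hext hint⟩,
    no_AC1 hstd hnc, no_AC2 hstd hnc, no_AC3 hstd hnc⟩
end

section
/- Let p and q be positive integers, let G be the subgroup of S([p+q]) generated by γ_ext and γ_int, and let U be a set of (p,q)-connected permutations of [p+q] such that U is invariant under conjugation by elements of G. Set U₀ = {τ ∈ U : τ(p) = p+1}. Then U = {στσ⁻¹ : σ ∈ G, τ ∈ U₀}. -/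
lemma ext_pow (p q : ℕ) (n i : ℕ) (hi : i < p) :
    (gammaExt p q ^ n) ⟨i, by omega⟩ = ⟨(i + n) % p, by have := Nat.mod_lt (i+n) (by omega : 0 < p); omega⟩ := by
  have hlen : ((List.finRange (p+q)).take p).length = p := by simp
  have hnd : ((List.finRange (p+q)).take p).Nodup :=
    (List.take_sublist _ _).nodup (List.nodup_finRange _)
  have h1 : ((List.finRange (p+q)).take p)[i]'(by omega) = ⟨i, by omega⟩ := by
    simp only [List.getElem_take, List.getElem_finRange, Fin.cast_mk]
  have := List.formPerm_pow_apply_getElem _ hnd n i (by omega)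
  rw [h1] at this
  rw [gammaExt, this]
  simp only [List.getElem_take, List.getElem_finRange, Fin.cast_mk, hlen]

lemma int_pow (p q : ℕ) (hq : 0 < q) (n i : ℕ) (hi : i < q) :
    (gammaInt p q ^ n) ⟨p + i, by omega⟩ = ⟨p + (i + n) % q, by have := Nat.mod_lt (i+n) hq; omega⟩ := by
  have hlen : ((List.finRange (p+q)).drop p).length = q := by simp
  have hnd : ((List.finRange (p+q)).drop p).Nodup :=
    (List.drop_sublist _ _).nodup (List.nodup_finRange _)
  have h1 : ((List.finRange (p+q)).drop p)[i]'(by omega) = ⟨p + i, by omega⟩ := by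
    simp only [List.getElem_drop, List.getElem_finRange, Fin.cast_mk]
  have := List.formPerm_pow_apply_getElem _ hnd n i (by omega)
  rw [h1] at this
  rw [gammaInt, this]
  simp only [List.getElem_drop, List.getElem_finRange, Fin.cast_mk, hlen]

lemma ext_fix (p q : ℕ) (n : ℕ) (x : Fin (p+q)) (hx : p ≤ x.val) :
    (gammaExt p q ^ n) x = x := by
  apply Equiv.Perm.pow_apply_eq_self_of_apply_eq_self
  apply List.formPerm_apply_of_notMem
  intro h
  obtain ⟨k, hk, hke⟩ := List.mem_iff_getElem.mp h
  simp only [List.length_take, List.length_finRange] at hk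
  rw [List.getElem_take, List.getElem_finRange] at hke
  rw [← hke] at hx
  simp at hx; omega

lemma int_fix (p q : ℕ) (n : ℕ) (x : Fin (p+q)) (hx : x.val < p) :
    (gammaInt p q ^ n) x = x := by
  apply Equiv.Perm.pow_apply_eq_self_of_apply_eq_self
  apply List.formPerm_apply_of_notMem
  intro h
  obtain ⟨k, hk, hke⟩ := List.mem_iff_getElem.mp h
  rw [List.getElem_drop, List.getElem_finRange] at hke
  rw [← hke] at hx
  simp at hx

/-- Lemma 6.3: if `G` is the subgroup of `S([p+q])` generated by `γ_ext` and `γ_int`, and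
`U` is a set of `(p,q)`-connected permutations invariant under conjugation by elements of
`G`, then with `U₀ = {τ ∈ U : τ(p) = p+1}` one has `U = {στσ⁻¹ : σ ∈ G, τ ∈ U₀}`. -/
theorem stmt_17 (p q : ℕ) (hp : 0 < p) (hq : 0 < q)
    (U : Set (Equiv.Perm (Fin (p + q))))
    (hconn : ∀ τ ∈ U, AnnConnected p q τ)
    (hinv : ∀ σ ∈ Subgroup.closure ({gammaExt p q, gammaInt p q} :
        Set (Equiv.Perm (Fin (p + q)))), ∀ τ ∈ U, σ * τ * σ⁻¹ ∈ U) :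
    U = {ρ : Equiv.Perm (Fin (p + q)) |
          ∃ σ ∈ Subgroup.closure ({gammaExt p q, gammaInt p q} :
              Set (Equiv.Perm (Fin (p + q)))),
            ∃ τ ∈ U, τ ⟨p - 1, by omega⟩ = ⟨p, by omega⟩ ∧ ρ = σ * τ * σ⁻¹} := by
  ext rho
  simp only [Set.mem_setOf_eq]
  constructor
  · intro hrho
    obtain ⟨A, ⟨a, hA⟩, ⟨u, huA⟩, ⟨v, hvA⟩⟩ := hconn rho hrho
    rw [hA] at huA hvA
    have hu : (u : ℕ) < p := huA.2
    have hv : p ≤ (v : ℕ) := hvA.2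
    have hsc : rho.SameCycle u v := huA.1.symm.trans hvA.1
    obtain ⟨n, -, hn⟩ := hsc.exists_pow_eq'
    have hex : ∃ m : ℕ, p ≤ (((rho ^ m) u : Fin (p+q)) : ℕ) := ⟨n, by rw [hn]; exact hv⟩
    set N := Nat.find hex with hNdef
    have hNspec : p ≤ (((rho ^ N) u : Fin (p+q)) : ℕ) := Nat.find_spec hex
    have hN0 : N ≠ 0 := by
      intro h
      rw [h] at hNspec
      simp only [pow_zero, Equiv.Perm.coe_one, id_eq] at hNspec
      omega
    set x : Fin (p+q) := (rho ^ (N-1)) u with hxdef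
    have hxlt : (x : ℕ) < p := by
      have := Nat.find_min hex (show N - 1 < N by omega)
      rw [← hxdef] at this
      omega
    set y : Fin (p+q) := (rho ^ N) u with hydef
    have hxy : rho x = y := by
      have hNs : N - 1 + 1 = N := by omega
      rw [hxdef, hydef, ← Equiv.Perm.mul_apply, ← pow_succ', hNs]
    have hyge : p ≤ (y : ℕ) := hNspec
    have hylt : (y : ℕ) - p < q := by omega
    set σ : Equiv.Perm (Fin (p+q)) :=
      gammaExt p q ^ ((x : ℕ) + 1) * gammaInt p q ^ ((y : ℕ) - p) with hσdef
    have hσmem : σ ∈ Subgroup.closure ({gammaExt p q, gammaInt p q} :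
        Set (Equiv.Perm (Fin (p + q)))) := by
      apply mul_mem
      · exact pow_mem (Subgroup.subset_closure (by simp)) _
      · exact pow_mem (Subgroup.subset_closure (by simp)) _
    have hσ1 : σ ⟨p - 1, by omega⟩ = x := by
      rw [hσdef, Equiv.Perm.mul_apply, int_fix p q _ _ (by simp; omega : ((⟨p-1, by omega⟩ : Fin (p+q)) : ℕ) < p)]
      rw [ext_pow p q _ _ (by omega : p - 1 < p)]
      apply Fin.ext
      simp only
      have : (p - 1 + ((x : ℕ) + 1)) % p = (x : ℕ) := by
        have h1 : p - 1 + ((x : ℕ) + 1) = p + (x : ℕ) := by omega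
        rw [h1, Nat.add_mod_left, Nat.mod_eq_of_lt hxlt]
      omega
    have hσ2 : σ ⟨p, by omega⟩ = y := by
      have hp0 : (⟨p, by omega⟩ : Fin (p+q)) = ⟨p + 0, by omega⟩ := by simp
      rw [hσdef, Equiv.Perm.mul_apply, hp0, int_pow p q hq _ 0 hq]
      rw [ext_fix]
      · apply Fin.ext
        simp only
        have : (0 + ((y : ℕ) - p)) % q = (y : ℕ) - p := by
          rw [Nat.zero_add, Nat.mod_eq_of_lt hylt]
        omega
      · simp only
        omega
    refine ⟨σ, hσmem, σ⁻¹ * rho * σ, ?_, ?_, by group⟩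
    · have := hinv σ⁻¹ (inv_mem hσmem) rho hrho
      rwa [inv_inv] at this
    · rw [Equiv.Perm.mul_apply, Equiv.Perm.mul_apply, hσ1, hxy]
      rw [← hσ2, ← Equiv.Perm.mul_apply, inv_mul_cancel, Equiv.Perm.one_apply]
  · rintro ⟨σ, hσ, τ, hτ, -, rfl⟩
    exact hinv σ hσ τ hτ
end
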